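/- arXiv:1707.06166 — 8 statements merged into one kernel-verified Lean document; each statement's English description precedes it below -/
import Mathlib

section
/- Let M be a closed z-invariant subspace of H containing a function not vanishing at 0, and let h be the orthogonal projection of the constant function 1 onto M. Then ||h||² = h(0), and the function G = h/√(h(0)) is H-inner. -/
open Filter Topology
open scoped InnerProductSpace ComplexConjugate

/-- A weighted Hardy space `H²_ω`: a Hilbert space with an orthogonal basis of
monomials `e k` (representing `z^k`) with `‖e k‖² = ω k`, together with the shift
operator `S` (multiplication by `z`). -/
structure WeightedHardySpace where
  E : Type
  [instN : NormedAddCommGroup E]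
  [instI : InnerProductSpace ℂ E]
  [instC : CompleteSpace E]
  ω : ℕ → ℝ
  hωpos : ∀ k, 0 < ω k
  hω0 : ω 0 = 1
  hωlim : Tendsto (fun k => ω k / ω (k + 1)) atTop (𝓝 1)
  e : ℕ → E
  horth : ∀ j k, ⟪e j, e k⟫_ℂ = if j = k then (ω k : ℂ) else 0
  hdense : (Submodule.span ℂ (Set.range e)).topologicalClosure = ⊤
  S : E →L[ℂ] E
  hshift : ∀ k, S (e k) = e (k + 1)

attribute [instance] WeightedHardySpace.instN WeightedHardySpace.instI WeightedHardySpace.instC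

namespace WeightedHardySpace

variable (H : WeightedHardySpace)

/-- The constant function `1`. -/
noncomputable def one : H.E := H.e 0

/-- The `k`-th Taylor coefficient of `f`. -/
noncomputable def coeff (f : H.E) (k : ℕ) : ℂ := ⟪H.e k, f⟫_ℂ / (H.ω k : ℂ)

/-- Evaluation of `f` at a point `w` of the unit disk. -/
noncomputable def eval (f : H.E) (w : ℂ) : ℂ := ∑' k, H.coeff f k * w ^ k

/-- Multiplication of `f` by the polynomial `p`. -/
noncomputable def polyMul (p : Polynomial ℂ) (f : H.E) : H.E :=
  ∑ i ∈ p.support, p.coeff i • ((H.S ^ i) f)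

/-- The closed shift-invariant subspace `[f]` generated by `f`. -/
noncomputable def genSub (f : H.E) : Submodule ℂ H.E :=
  (Submodule.span ℂ (Set.range fun p : Polynomial ℂ => H.polyMul p f)).topologicalClosure

/-- `f` is `H`-inner: unit norm and `⟨z^j f, f⟩ = 0` for all `j ≥ 1`. -/
def IsInner (f : H.E) : Prop :=
  ‖f‖ = 1 ∧ ∀ j : ℕ, 1 ≤ j → ⟪(H.S ^ j) f, f⟫_ℂ = 0

end WeightedHardySpace

lemma WHS_eval_zero (H : WeightedHardySpace) (f : H.E) :
    H.eval f 0 = ⟪H.e 0, f⟫_ℂ := by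
  have hf : ∀ k : ℕ, k ≠ 0 → H.coeff f k * (0:ℂ) ^ k = 0 := by
    intro k hk; simp [zero_pow hk]
  have ht : H.eval f 0 = H.coeff f 0 * (0:ℂ) ^ 0 :=
    tsum_eq_single 0 fun b hb => hf b hb
  rw [ht]
  simp [WeightedHardySpace.coeff, H.hω0]

lemma WHS_shift_perp (H : WeightedHardySpace) (f : H.E) :
    ⟪H.S f, H.e 0⟫_ℂ = 0 := by
  have key : ∀ g : H.E, ⟪H.e 0, H.S g⟫_ℂ = 0 := by
    set φ : H.E →L[ℂ] ℂ := (innerSL ℂ (H.e 0)).comp H.S with hφ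
    have hspan : Submodule.span ℂ (Set.range H.e) ≤ φ.ker := by
      rw [Submodule.span_le]
      rintro _ ⟨k, rfl⟩
      simp [hφ, H.hshift, H.horth]
    have h2 := Submodule.topologicalClosure_minimal _ hspan
      (ContinuousLinearMap.isClosed_ker φ)
    rw [H.hdense] at h2
    intro g
    exact h2 (Submodule.mem_top (x := g))
  rw [← inner_conj_symm, key, map_zero]

/-- If `M` is a closed `z`-invariant subspace containing a function not vanishing at `0`,
and `h` is the orthogonal projection of `1` onto `M`, then `‖h‖² = h(0)` and
`G = h / √(h(0))` is `H`-inner. -/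
theorem projection_norm_sq_and_inner (H : WeightedHardySpace) (M : Submodule ℂ H.E)
    (hMclosed : IsClosed (M : Set H.E)) (hMinv : ∀ f ∈ M, H.S f ∈ M)
    (hex : ∃ f ∈ M, H.eval f 0 ≠ 0)
    (h : H.E) (hhM : h ∈ M) (hhperp : H.one - h ∈ Mᗮ) :
    ((‖h‖ : ℂ)) ^ 2 = H.eval h 0 ∧
      H.IsInner ((((Real.sqrt ((H.eval h 0).re) : ℝ) : ℂ))⁻¹ • h) := by
  have hperp0 : ⟪H.one - h, h⟫_ℂ = 0 :=
    inner_eq_zero_symm.mpr (Submodule.inner_right_of_mem_orthogonal hhM hhperp)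
  have heval : H.eval h 0 = (‖h‖ : ℂ) ^ 2 := by
    rw [WHS_eval_zero]
    have : ⟪H.e 0, h⟫_ℂ = ⟪H.one - h, h⟫_ℂ + ⟪h, h⟫_ℂ := by
      rw [← inner_add_left]
      simp [WeightedHardySpace.one]
    rw [this, hperp0, zero_add, inner_self_eq_norm_sq_to_K]
    norm_num
  refine ⟨heval.symm, ?_, ?_⟩
  · -- norm of normalized vector is 1
    have hne : h ≠ 0 := by
      rintro rfl
      obtain ⟨f, hfM, hf0⟩ := hex
      apply hf0
      rw [WHS_eval_zero]
      have : H.one ∈ Mᗮ := by simpa using hhperp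
      exact Submodule.inner_left_of_mem_orthogonal hfM (by simpa [WeightedHardySpace.one] using this)
    have hre : (H.eval h 0).re = ‖h‖ ^ 2 := by
      rw [heval]
      norm_cast
    rw [hre, Real.sqrt_sq (norm_nonneg h), norm_smul]
    have hn : ‖h‖ ≠ 0 := norm_ne_zero_iff.mpr hne
    rw [norm_inv]
    simp [Complex.norm_real, abs_of_nonneg (norm_nonneg h), hn]
  · intro j hj
    have hSpowM : ∀ m : ℕ, (H.S ^ m) h ∈ M := by
      intro m
      induction m with
      | zero => simpa using hhM
      | succ n ih =>
        have : (H.S ^ (n + 1)) h = H.S ((H.S ^ n) h) := by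
          rw [pow_succ']; rfl
        rw [this]; exact hMinv _ ih
    have hkey : ⟪(H.S ^ j) h, h⟫_ℂ = 0 := by
      have h1 : ⟪(H.S ^ j) h, H.one - h⟫_ℂ = 0 :=
        Submodule.inner_right_of_mem_orthogonal (hSpowM j) hhperp
      have h2 : ⟪(H.S ^ j) h, H.one⟫_ℂ = 0 := by
        obtain ⟨m, rfl⟩ := Nat.exists_eq_add_of_le hj
        have : (H.S ^ (1 + m)) h = H.S ((H.S ^ m) h) := by
          rw [add_comm, pow_succ']; rfl
        rw [this, WeightedHardySpace.one]
        exact WHS_shift_perp H _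
      have h3 : ⟪(H.S ^ j) h, h⟫_ℂ
          = ⟪(H.S ^ j) h, H.one⟫_ℂ - ⟪(H.S ^ j) h, H.one - h⟫_ℂ := by
        rw [inner_sub_right]; ring
      rw [h3, h1, h2, sub_zero]
    simp [inner_smul_left, inner_smul_right, map_smul, hkey]
    exact Or.inr (Or.inl (by simpa using hkey))
end

section
/- Let M be a closed z-invariant subspace of H containing a function not vanishing at 0, and let h be the orthogonal projection of 1 onto M. Then G = h/√(h(0)) is the unique solution of the extremal problem sup{ Re(g(0)) : g ∈ M, ||g|| ≤ 1 }, and the supremum equals √(h(0)). -/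
open Filter Topology
open scoped InnerProductSpace ComplexConjugate

private lemma eval_zero_aux (H : WeightedHardySpace) (f : H.E) :
    H.eval f 0 = ⟪H.one, f⟫_ℂ := by
  unfold WeightedHardySpace.eval
  rw [tsum_eq_single 0]
  · simp [WeightedHardySpace.coeff, WeightedHardySpace.one, H.hω0]
  · intro b hb
    simp [zero_pow hb]


/-- `G = h/√(h(0))` extremal. -/
theorem extremal_problem_solution (H : WeightedHardySpace) (M : Submodule ℂ H.E)
    (hMclosed : IsClosed (M : Set H.E)) (hMinv : ∀ f ∈ M, H.S f ∈ M)
    (hex : ∃ f ∈ M, H.eval f 0 ≠ 0)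
    (h : H.E) (hhM : h ∈ M) (hhperp : H.one - h ∈ Mᗮ) :
    let G : H.E := (((Real.sqrt ((H.eval h 0).re) : ℝ) : ℂ))⁻¹ • h
    G ∈ M ∧ ‖G‖ ≤ 1 ∧
      (H.eval G 0).re = Real.sqrt ((H.eval h 0).re) ∧
      (∀ g ∈ M, ‖g‖ ≤ 1 → (H.eval g 0).re ≤ Real.sqrt ((H.eval h 0).re)) ∧
      (∀ g ∈ M, ‖g‖ ≤ 1 → (H.eval g 0).re = Real.sqrt ((H.eval h 0).re) → g = G) := by
  have key : ∀ g ∈ M, H.eval g 0 = ⟪h, g⟫_ℂ := by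
    intro g hg
    rw [eval_zero_aux]
    have h0 : ⟪g, H.one - h⟫_ℂ = 0 := (Submodule.mem_orthogonal M _).mp hhperp g hg
    have h1 : ⟪H.one - h, g⟫_ℂ = 0 := by
      rw [← inner_conj_symm, h0, map_zero]
    rw [inner_sub_left] at h1
    exact sub_eq_zero.mp h1
  have hne : h ≠ 0 := by
    obtain ⟨f, hfM, hf0⟩ := hex
    intro h0
    exact hf0 (by rw [key f hfM, h0, inner_zero_left])
  have hpos : (0:ℝ) < ‖h‖ := norm_pos_iff.mpr hne
  have hself : ⟪h, h⟫_ℂ = (‖h‖:ℂ)^2 := inner_self_eq_norm_sq_to_K h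
  have hnorm : (H.eval h 0).re = ‖h‖ ^ 2 := by
    rw [key h hhM, hself, ← Complex.ofReal_pow, Complex.ofReal_re]
  have hsqrt : Real.sqrt ((H.eval h 0).re) = ‖h‖ := by
    rw [hnorm, Real.sqrt_sq (norm_nonneg h)]
  rw [hsqrt]
  set G : H.E := ((‖h‖ : ℝ) : ℂ)⁻¹ • h with hG
  have hGnorm : ‖G‖ = 1 := by
    rw [hG, norm_smul, norm_inv, Complex.norm_real, Real.norm_eq_abs,
      abs_of_pos hpos, inv_mul_cancel₀ hpos.ne']
  have hGM : G ∈ M := by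
    rw [hG]; exact M.smul_mem _ hhM
  have hGeval : (H.eval G 0).re = ‖h‖ := by
    rw [key G hGM, hG, inner_smul_right, hself]
    have hcne : ((‖h‖:ℝ):ℂ) ≠ 0 := by
      simp [hpos.ne']
    have : ((‖h‖:ℝ):ℂ)⁻¹ * (‖h‖:ℂ)^2 = ((‖h‖:ℝ):ℂ) := by
      rw [sq, ← mul_assoc, inv_mul_cancel₀ hcne, one_mul]
    rw [this, Complex.ofReal_re]
  refine ⟨hGM, hGnorm.le, hGeval, ?_, ?_⟩
  · intro g hgM hgn
    rw [key g hgM]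
    have := re_inner_le_norm (𝕜 := ℂ) h g
    calc (⟪h, g⟫_ℂ).re ≤ ‖h‖ * ‖g‖ := this
      _ ≤ ‖h‖ * 1 := by nlinarith
      _ = ‖h‖ := mul_one _
  · intro g hgM hgn hge
    rw [key g hgM] at hge
    have hre : (⟪G, g⟫_ℂ).re = 1 := by
      rw [hG, inner_smul_left]
      simp only [Complex.mul_re]
      rw [Complex.conj_re, Complex.conj_im]
      simp only [Complex.inv_re, Complex.inv_im, Complex.ofReal_re, Complex.ofReal_im]
      rw [hge]
      field_simp [Complex.normSq_ofReal]
      rw [Complex.normSq_ofReal]; ring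
    have hexp : ‖g - G‖^2 = ‖g‖^2 - 2 * (⟪g, G⟫_ℂ).re + ‖G‖^2 := by
      have := norm_sub_sq (𝕜 := ℂ) g G
      simpa [RCLike.re_to_complex] using this
    have hsymm : (⟪g, G⟫_ℂ).re = (⟪G, g⟫_ℂ).re := by
      have := inner_re_symm (𝕜 := ℂ) g G
      simpa [RCLike.re_to_complex] using this
    have hle : ‖g - G‖^2 ≤ 0 := by
      rw [hexp, hsymm, hre, hGnorm]
      nlinarith [norm_nonneg g, hgn]
    have h2 : ‖g - G‖ = 0 := by nlinarith [norm_nonneg (g - G)]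
    exact sub_eq_zero.mp (norm_eq_zero.mp h2)
end

section
/- If G is a non-constant H-inner function, then the closed z-invariant subspace [G] generated by G is a proper subspace of H (equivalently, G is not cyclic). -/
open Filter Topology
open scoped InnerProductSpace ComplexConjugate

section Aux

variable (H : WeightedHardySpace)

lemma aux_inner_e0_shift (f : H.E) : ⟪H.e 0, H.S f⟫_ℂ = 0 := by
  let Φ : H.E →L[ℂ] ℂ := (innerSL ℂ (H.e 0)).comp H.S
  have hle : Submodule.span ℂ (Set.range H.e) ≤ LinearMap.ker (Φ : H.E →ₗ[ℂ] ℂ) := by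
    rw [Submodule.span_le]
    rintro _ ⟨k, rfl⟩
    simp only [SetLike.mem_coe, LinearMap.mem_ker]
    show ⟪H.e 0, H.S (H.e k)⟫_ℂ = 0
    rw [H.hshift, H.horth]
    simp
  have hker := Submodule.topologicalClosure_minimal _ hle (ContinuousLinearMap.isClosed_ker Φ)
  rw [H.hdense] at hker
  exact hker (Submodule.mem_top (R := ℂ) (x := f))

lemma aux_inner_e0_shiftpow (f : H.E) {i : ℕ} (hi : 1 ≤ i) :
    ⟪H.e 0, (H.S ^ i) f⟫_ℂ = 0 := by
  obtain ⟨j, rfl⟩ := Nat.exists_eq_add_of_le hi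
  rw [show (1 + j) = j + 1 by ring, pow_succ', ContinuousLinearMap.mul_apply]
  exact aux_inner_e0_shift H _

lemma aux_inner_e0_polyMul (p : Polynomial ℂ) (G : H.E) :
    ⟪H.e 0, H.polyMul p G⟫_ℂ = p.coeff 0 * ⟪H.e 0, G⟫_ℂ := by
  unfold WeightedHardySpace.polyMul
  rw [inner_sum]
  rw [Finset.sum_eq_single 0]
  · simp [inner_smul_right]
  · intro i _ hi
    rw [inner_smul_right, aux_inner_e0_shiftpow H G (Nat.one_le_iff_ne_zero.mpr hi), mul_zero]
  · intro h
    rw [Polynomial.notMem_support_iff.mp h]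
    simp

lemma aux_inner_polyMul_self (p : Polynomial ℂ) (G : H.E) (hG : H.IsInner G) :
    ⟪H.polyMul p G, G⟫_ℂ = conj (p.coeff 0) := by
  unfold WeightedHardySpace.polyMul
  rw [sum_inner]
  rw [Finset.sum_eq_single 0]
  · have : ⟪G, G⟫_ℂ = 1 := by
      rw [inner_self_eq_norm_sq_to_K, hG.1]; norm_num
    simp [inner_smul_left, this, hG.1]
  · intro i _ hi
    rw [inner_smul_left, hG.2 i (Nat.one_le_iff_ne_zero.mpr hi), mul_zero]
  · intro h
    rw [Polynomial.notMem_support_iff.mp h]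
    simp

end Aux

/-- A non-constant `H`-inner function generates a proper closed invariant subspace,
i.e. it is not cyclic. -/
theorem genSub_ne_top_of_isInner (H : WeightedHardySpace) (G : H.E)
    (hG : H.IsInner G) (hnc : ¬∃ c : ℂ, G = c • H.one) :
    H.genSub G ≠ ⊤ := by
  intro htop
  set g : ℂ := ⟪H.e 0, G⟫_ℂ with hgdef
  let Φ : H.E →L[ℂ] ℂ := innerSL ℂ (H.e 0) - g • innerSL ℂ G
  have hΦ0 : ∀ p : Polynomial ℂ, Φ (H.polyMul p G) = 0 := by
    intro p
    have h1 := aux_inner_e0_polyMul H p G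
    have h2 : ⟪G, H.polyMul p G⟫_ℂ = p.coeff 0 := by
      rw [← inner_conj_symm, aux_inner_polyMul_self H p G hG, Complex.conj_conj]
    show ⟪H.e 0, H.polyMul p G⟫_ℂ - g * ⟪G, H.polyMul p G⟫_ℂ = 0
    rw [h1, h2, ← hgdef]
    ring
  have hle : Submodule.span ℂ (Set.range fun p : Polynomial ℂ => H.polyMul p G)
      ≤ LinearMap.ker (Φ : H.E →ₗ[ℂ] ℂ) := by
    rw [Submodule.span_le]
    rintro _ ⟨p, rfl⟩
    exact LinearMap.mem_ker.mpr (hΦ0 p)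
  have hker := Submodule.topologicalClosure_minimal _ hle (ContinuousLinearMap.isClosed_ker Φ)
  rw [show (Submodule.span ℂ (Set.range fun p : Polynomial ℂ =>
      H.polyMul p G)).topologicalClosure = H.genSub G from rfl, htop] at hker
  have he0 : Φ (H.e 0) = 0 := hker (Submodule.mem_top (R := ℂ) (x := H.e 0))
  have hee : ⟪H.e 0, H.e 0⟫_ℂ = 1 := by
    rw [H.horth]; simp [H.hω0]
  have hge0 : ⟪G, H.e 0⟫_ℂ = conj g := by
    rw [← inner_conj_symm, hgdef]
  have hg1 : g * conj g = 1 := by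
    have : ⟪H.e 0, H.e 0⟫_ℂ - g * ⟪G, H.e 0⟫_ℂ = 0 := he0
    rw [hee, hge0] at this
    linear_combination -this
  have hGG : ⟪G, G⟫_ℂ = 1 := by
    rw [inner_self_eq_norm_sq_to_K, hG.1]; norm_num
  have hzero : ⟪G - g • H.e 0, G - g • H.e 0⟫_ℂ = 0 := by
    rw [inner_sub_sub_self, hGG, inner_smul_right, inner_smul_left, inner_smul_left,
      inner_smul_right, hge0, hgdef, hee]
    rw [← hgdef]
    linear_combination -hg1
  apply hnc
  exact ⟨g, by rw [← sub_eq_zero]; exact inner_self_eq_zero.mp hzero⟩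
end

section
/- If G is H-inner and there exist polynomials p_n with p_n G → 1 in H, then |G(0)| = 1 and hence G is constant. -/
open Filter Topology
open scoped InnerProductSpace ComplexConjugate

namespace WeightedHardySpace

variable (H : WeightedHardySpace)

lemma inner_one_self' : ⟪H.one, H.one⟫_ℂ = 1 := by
  rw [one, H.horth]; simp [H.hω0]

lemma inner_one_shift' (g : H.E) : ⟪H.one, H.S g⟫_ℂ = 0 := by
  have h1 : Submodule.span ℂ (Set.range H.e) ≤
      ((innerSL ℂ H.one).comp H.S).ker := by
    rw [Submodule.span_le]
    rintro _ ⟨k, rfl⟩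
    simp [LinearMap.mem_ker, H.hshift, one, H.horth]
  have h2 := Submodule.topologicalClosure_minimal _ h1
      (ContinuousLinearMap.isClosed_ker _)
  rw [H.hdense] at h2
  have h3 := h2 (Submodule.mem_top (x := g))
  simpa using h3

lemma inner_one_shift_pow' (g : H.E) {i : ℕ} (hi : 1 ≤ i) :
    ⟪H.one, (H.S ^ i) g⟫_ℂ = 0 := by
  obtain ⟨j, rfl⟩ := Nat.exists_eq_add_of_le hi
  rw [add_comm, pow_succ']
  exact H.inner_one_shift' _

lemma inner_one_polyMul' (q : Polynomial ℂ) (f : H.E) :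
    ⟪H.one, H.polyMul q f⟫_ℂ = q.coeff 0 * ⟪H.one, f⟫_ℂ := by
  unfold polyMul
  rw [inner_sum]
  have key : ∀ i ∈ q.support, ⟪H.one, q.coeff i • ((H.S ^ i) f)⟫_ℂ =
      if i = 0 then q.coeff 0 * ⟪H.one, f⟫_ℂ else 0 := by
    intro i _
    rcases Nat.eq_zero_or_pos i with h | h
    · subst h; simp [inner_smul_right]
    · rw [if_neg (by omega), inner_smul_right, H.inner_one_shift_pow' f h, mul_zero]
  rw [Finset.sum_congr rfl key,
    Finset.sum_ite_eq' q.support 0 (fun _ => q.coeff 0 * ⟪H.one, f⟫_ℂ)]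
  split
  · rfl
  · next h => rw [Polynomial.notMem_support_iff.mp h, zero_mul]

lemma inner_polyMul_of_isInner' {G : H.E} (hG : H.IsInner G) (q : Polynomial ℂ) :
    ⟪G, H.polyMul q G⟫_ℂ = q.coeff 0 := by
  have hGG : ⟪G, G⟫_ℂ = 1 := by
    rw [inner_self_eq_norm_sq_to_K, hG.1]; norm_num
  unfold polyMul
  rw [inner_sum]
  have key : ∀ i ∈ q.support, ⟪G, q.coeff i • ((H.S ^ i) G)⟫_ℂ =
      if i = 0 then q.coeff 0 else 0 := by
    intro i _
    rcases Nat.eq_zero_or_pos i with h | h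
    · subst h; simp [inner_smul_right, hGG, hG.1]
    · have h0 : ⟪G, (H.S ^ i) G⟫_ℂ = 0 := by
        rw [← inner_conj_symm, hG.2 i h, map_zero]
      rw [if_neg (by omega), inner_smul_right, h0, mul_zero]
  rw [Finset.sum_congr rfl key, Finset.sum_ite_eq' q.support 0 (fun _ => q.coeff 0)]
  split
  · rfl
  · next h => rw [Polynomial.notMem_support_iff.mp h]

end WeightedHardySpace

/-- If `G` is `H`-inner and there are polynomials `pₙ` with `pₙ G → 1` in `H`,
then `|G(0)| = 1` and `G` is constant. -/
theorem isInner_cyclic_implies_constant (H : WeightedHardySpace) (G : H.E)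
    (hG : H.IsInner G) (p : ℕ → Polynomial ℂ)
    (hp : Tendsto (fun n => H.polyMul (p n) G) atTop (𝓝 H.one)) :
    ‖H.eval G 0‖ = 1 ∧ ∃ c : ℂ, G = c • H.one := by
  set a : ℂ := ⟪G, H.one⟫_ℂ with ha
  have hGG : ⟪G, G⟫_ℂ = 1 := by
    rw [inner_self_eq_norm_sq_to_K, hG.1]; norm_num
  have hb : ⟪H.one, G⟫_ℂ = conj a := by rw [ha, ← inner_conj_symm]
  have h1 : Tendsto (fun n => ((p n).coeff 0 : ℂ)) atTop (𝓝 a) := by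
    have := Filter.Tendsto.inner (𝕜 := ℂ) (tendsto_const_nhds (x := G)) hp
    simpa [H.inner_polyMul_of_isInner' hG] using this
  have h2 : Tendsto (fun n => (p n).coeff 0 * conj a) atTop (𝓝 1) := by
    have := Filter.Tendsto.inner (𝕜 := ℂ) (tendsto_const_nhds (x := H.one)) hp
    simpa only [H.inner_one_polyMul', H.inner_one_self', hb] using this
  have haa : a * conj a = 1 := tendsto_nhds_unique (h1.mul_const (conj a)) h2
  have habs : ‖a‖ = 1 := by
    have : (Complex.normSq a : ℂ) = 1 := by rw [← Complex.mul_conj]; exact haa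
    have h4 : Complex.normSq a = 1 := by exact_mod_cast this
    rw [← Complex.sq_norm] at h4
    nlinarith [norm_nonneg a]
  have hzero : H.one - a • G = 0 := by
    have hin : ⟪H.one - a • G, H.one - a • G⟫_ℂ = 0 := by
      rw [inner_sub_left, inner_sub_right, inner_sub_right, inner_smul_left,
      inner_smul_right, inner_smul_left, inner_smul_right, H.inner_one_self',
        hGG, hb, ← ha]
      linear_combination -haa
    exact inner_self_eq_zero.mp hin
  have hone : H.one = a • G := by
    have := sub_eq_zero.mp hzero
    exact this
  have hGc : G = conj a • H.one := by
    rw [hone, smul_smul, mul_comm (conj a) a, haa, one_smul]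
  have heval : H.eval G 0 = conj a := by
    unfold WeightedHardySpace.eval
    rw [tsum_eq_single 0 (fun b hb => by simp [zero_pow hb])]
    simp only [pow_zero, mul_one]
    unfold WeightedHardySpace.coeff
    rw [show H.e 0 = H.one from rfl, hb, H.hω0]
    simp
  constructor
  · rw [heval]
    simpa [habs] using Complex.norm_conj a
  · exact ⟨conj a, hGc⟩
end

section
/- If f is H-inner, then for every n the optimal approximant p_n* of degree n to 1/f is the constant polynomial conj(f(0)); equivalently, the orthogonal projection of 1 onto P_n f equals conj(f(0)) f for all n. -/
open Filter Topology
open scoped InnerProductSpace ComplexConjugate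

section Aux
open Polynomial

namespace WeightedHardySpace

variable (H : WeightedHardySpace)

lemma dense_span : Dense (↑(Submodule.span ℂ (Set.range H.e)) : Set H.E) :=
  Submodule.dense_iff_topologicalClosure_eq_top.mpr H.hdense

lemma pow_shift_e (i k : ℕ) : (H.S ^ i) (H.e k) = H.e (k + i) := by
  induction i with
  | zero => simp
  | succ i ih =>
      rw [pow_succ', ContinuousLinearMap.mul_apply, ih, H.hshift]
      rfl

lemma inner_e_pow_shift (j i : ℕ) (x : H.E) :
    ⟪H.e j, (H.S ^ i) x⟫_ℂ =
      if i ≤ j then ((H.ω j / H.ω (j - i) : ℝ) : ℂ) * ⟪H.e (j - i), x⟫_ℂ else 0 := by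
  have key : ((innerSL ℂ (H.e j)).comp (H.S ^ i) : H.E →L[ℂ] ℂ) =
      if i ≤ j then ((H.ω j / H.ω (j - i) : ℝ) : ℂ) • innerSL ℂ (H.e (j - i)) else 0 := by
    refine ContinuousLinearMap.ext_on (dense_span H) ?_
    rintro _ ⟨k, rfl⟩
    simp only [ContinuousLinearMap.comp_apply, innerSL_apply_apply, pow_shift_e, H.horth]
    by_cases hij : i ≤ j
    · rw [if_pos hij]
      simp only [ContinuousLinearMap.smul_apply, innerSL_apply_apply, H.horth, smul_eq_mul]
      by_cases hk : j - i = k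
      · rw [if_pos hk, if_pos (by omega)]
        subst hk
        have h1 : H.ω (j - i) ≠ 0 := ne_of_gt (H.hωpos _)
        have : j - i + i = j := by omega
        rw [this]
        push_cast
        exact (div_mul_cancel₀ _ (by exact_mod_cast h1)).symm
      · rw [if_neg hk, if_neg (by omega), mul_zero]
    · rw [if_neg hij, if_neg (by omega)]
      rfl
  have := congrFun (congrArg (fun T : H.E →L[ℂ] ℂ => (T : H.E → ℂ)) key) x
  simp only [ContinuousLinearMap.comp_apply, innerSL_apply_apply] at this
  rw [this]
  by_cases hij : i ≤ j
  · rw [if_pos hij, if_pos hij]; rfl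
  · rw [if_neg hij, if_neg hij]; rfl

lemma eq_zero_of_inner_e (x : H.E) (h : ∀ k, ⟪H.e k, x⟫_ℂ = 0) : x = 0 := by
  have hx : ∀ k, H.e k ∈ (ℂ ∙ x)ᗮ := by
    intro k
    rw [Submodule.mem_orthogonal]
    rintro u hu
    rcases Submodule.mem_span_singleton.mp hu with ⟨c, rfl⟩
    rw [inner_smul_left, ← inner_conj_symm, h k, map_zero, mul_zero]
  have hspan : Submodule.span ℂ (Set.range H.e) ≤ (ℂ ∙ x)ᗮ :=
    Submodule.span_le.mpr (by rintro _ ⟨k, rfl⟩; exact hx k)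
  have hcl : (Submodule.span ℂ (Set.range H.e)).topologicalClosure ≤ (ℂ ∙ x)ᗮ :=
    Submodule.topologicalClosure_minimal _ hspan (Submodule.isClosed_orthogonal _)
  have hxmem : x ∈ (ℂ ∙ x)ᗮ := hcl (H.hdense ▸ Submodule.mem_top)
  exact inner_self_eq_zero.mp
    ((Submodule.mem_orthogonal _ x).mp hxmem x (Submodule.mem_span_singleton_self x))

lemma polyMul_eq_aeval (p : Polynomial ℂ) (f : H.E) :
    H.polyMul p f = Polynomial.aeval H.S p f := by
  rw [Polynomial.aeval_def, Polynomial.eval₂_eq_sum, Polynomial.sum_def, polyMul]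
  rw [ContinuousLinearMap.sum_apply]
  refine Finset.sum_congr rfl fun i _ => ?_
  rw [Algebra.algebraMap_eq_smul_one, smul_mul_assoc, one_mul,
    ContinuousLinearMap.smul_apply]

lemma polyMul_C (a : ℂ) (f : H.E) : H.polyMul (Polynomial.C a) f = a • f := by
  rw [polyMul_eq_aeval, Polynomial.aeval_C, Algebra.algebraMap_eq_smul_one,
    ContinuousLinearMap.smul_apply, ContinuousLinearMap.one_apply]

lemma polyMul_sub (p q : Polynomial ℂ) (f : H.E) :
    H.polyMul (p - q) f = H.polyMul p f - H.polyMul q f := by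
  simp [polyMul_eq_aeval, map_sub]

lemma inner_ortho (f : H.E) (hf : H.IsInner f) (q : Polynomial ℂ) :
    ⟪H.e 0 - (starRingEnd ℂ) ⟪H.e 0, f⟫_ℂ • f, H.polyMul q f⟫_ℂ = 0 := by
  rw [polyMul, inner_sum]
  apply Finset.sum_eq_zero
  intro i _
  rw [inner_smul_right, inner_sub_left, inner_smul_left]
  rcases Nat.eq_zero_or_pos i with rfl | hip
  · have hff : ⟪f, f⟫_ℂ = 1 := by
      rw [inner_self_eq_norm_sq_to_K, hf.1]; norm_num
    simp only [pow_zero, ContinuousLinearMap.one_apply, hff, mul_one,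
      Complex.conj_conj, sub_self, mul_zero]
  · have h1 : ⟪H.e 0, (H.S ^ i) f⟫_ℂ = 0 := by
      rw [inner_e_pow_shift, if_neg (by omega)]
    have h2 : ⟪f, (H.S ^ i) f⟫_ℂ = 0 := by
      rw [← inner_conj_symm, hf.2 i hip, map_zero]
    rw [h1, h2, mul_zero, sub_zero, mul_zero]

lemma polyMul_eq_zero_imp (f : H.E) (hfne : f ≠ 0) (q : Polynomial ℂ)
    (h : H.polyMul q f = 0) : q = 0 := by
  by_contra hq
  have hex : ∃ k, ⟪H.e k, f⟫_ℂ ≠ 0 := by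
    by_contra hno
    push_neg at hno
    exact hfne (eq_zero_of_inner_e H f hno)
  set m := Nat.find hex with hm
  have hmne : ⟪H.e m, f⟫_ℂ ≠ 0 := Nat.find_spec hex
  have hminm : ∀ k < m, ⟪H.e k, f⟫_ℂ = 0 := by
    intro k hk
    have := Nat.find_min hex hk
    simpa using this
  set i0 := q.natTrailingDegree with hi0def
  have hi0 : q.coeff i0 ≠ 0 := by
    intro hc
    exact hq (Polynomial.trailingCoeff_eq_zero.mp hc)
  have hz : ⟪H.e (m + i0), H.polyMul q f⟫_ℂ = 0 := by rw [h, inner_zero_right]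
  rw [polyMul, inner_sum, Finset.sum_eq_single i0] at hz
  · rw [inner_smul_right, inner_e_pow_shift, if_pos (Nat.le_add_left i0 m),
      Nat.add_sub_cancel] at hz
    have hω : ((H.ω (m + i0) / H.ω m : ℝ) : ℂ) ≠ 0 := by
      rw [Complex.ofReal_ne_zero]
      exact div_ne_zero (ne_of_gt (H.hωpos _)) (ne_of_gt (H.hωpos _))
    exact (mul_ne_zero hi0 (mul_ne_zero hω hmne)) hz
  · intro i hi hne
    rw [inner_smul_right, inner_e_pow_shift]
    have hlt : i0 < i :=
      lt_of_le_of_ne (Polynomial.natTrailingDegree_le_of_mem_supp i hi) (Ne.symm hne)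
    by_cases hle : i ≤ m + i0
    · rw [if_pos hle, hminm (m + i0 - i) (by omega), mul_zero, mul_zero]
    · rw [if_neg hle, mul_zero]
  · intro hni
    exact absurd (Polynomial.mem_support_iff.mpr hi0) hni

end WeightedHardySpace

end Aux

/-- If `f` is `H`-inner, then all optimal approximants are the constant `conj (f(0))`;
equivalently, the orthogonal projection of `1` onto `𝒫ₙ f` is `conj (f(0)) • f`. -/
theorem optimal_approximants_of_isInner (H : WeightedHardySpace) (f : H.E)
    (hf : H.IsInner f) (pstar : ℕ → Polynomial ℂ)
    (hdeg : ∀ n, (pstar n).degree ≤ (n : ℕ))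
    (hmin : ∀ n, ∀ q : Polynomial ℂ, q.degree ≤ (n : ℕ) →
      ‖H.polyMul (pstar n) f - H.one‖ ≤ ‖H.polyMul q f - H.one‖) :
    ∀ n, pstar n = Polynomial.C ((starRingEnd ℂ) (H.eval f 0)) ∧
      H.polyMul (pstar n) f = ((starRingEnd ℂ) (H.eval f 0)) • f := by
  intro n
  have heval : H.eval f 0 = ⟪H.e 0, f⟫_ℂ := by
    rw [WeightedHardySpace.eval,
      tsum_eq_single 0 (fun k hk => by simp [zero_pow hk])]
    simp [WeightedHardySpace.coeff, H.hω0]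
  set a : ℂ := (starRingEnd ℂ) ⟪H.e 0, f⟫_ℂ with ha
  have hfne : f ≠ 0 := by
    intro h0
    have h1n := hf.1
    rw [h0, norm_zero] at h1n
    exact one_ne_zero h1n.symm
  have key : ∀ q : Polynomial ℂ, ‖H.polyMul q f - H.one‖ ^ 2
      = ‖H.polyMul (q - Polynomial.C a) f‖ ^ 2 + ‖a • f - H.one‖ ^ 2 := by
    intro q
    have hw : H.polyMul q f - H.one
        = H.polyMul (q - Polynomial.C a) f + (a • f - H.one) := by
      rw [WeightedHardySpace.polyMul_sub, WeightedHardySpace.polyMul_C]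
      abel
    have horth : ⟪H.polyMul (q - Polynomial.C a) f, a • f - H.one⟫_ℂ = 0 := by
      rw [← inner_conj_symm]
      have hneg : a • f - H.one = -(H.e 0 - a • f) := by
        rw [WeightedHardySpace.one]; abel
      rw [hneg, inner_neg_left, WeightedHardySpace.inner_ortho H f hf, neg_zero,
        map_zero]
    rw [hw, @norm_add_sq ℂ, horth]
    simp
  have hCdeg : (Polynomial.C a).degree ≤ (n : ℕ) :=
    le_trans Polynomial.degree_C_le (by exact_mod_cast Nat.zero_le n)
  have h1 : ‖H.polyMul (pstar n) f - H.one‖ ≤ ‖a • f - H.one‖ := by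
    have := hmin n (Polynomial.C a) hCdeg
    rwa [WeightedHardySpace.polyMul_C] at this
  have h2 := key (pstar n)
  have hw0 : H.polyMul (pstar n - Polynomial.C a) f = 0 := by
    have hle : ‖H.polyMul (pstar n - Polynomial.C a) f‖ ^ 2 ≤ 0 := by
      nlinarith [norm_nonneg (H.polyMul (pstar n) f - H.one),
        norm_nonneg (a • f - H.one)]
    have := le_antisymm hle (sq_nonneg _)
    have hn0 : ‖H.polyMul (pstar n - Polynomial.C a) f‖ = 0 := by
      nlinarith [norm_nonneg (H.polyMul (pstar n - Polynomial.C a) f)]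
    exact norm_eq_zero.mp hn0
  have hq0 : pstar n - Polynomial.C a = 0 :=
    WeightedHardySpace.polyMul_eq_zero_imp H f hfne _ hw0
  have hps : pstar n = Polynomial.C a := sub_eq_zero.mp hq0
  refine ⟨by rw [heval, ← ha, hps], ?_⟩
  rw [heval, ← ha, hps, WeightedHardySpace.polyMul_C]
end

section
/- With f_Z the Shapiro-Shields determinant function for a finite set Z of distinct points in the disk, one has ||f_Z||² = conj(det K_Z) · f_Z(0). -/
open Filter Topology
open scoped InnerProductSpace ComplexConjugate

/-- Lemma 3.3: `‖f_Z‖² = conj(det K_Z) ⬝ f_Z(0)` for the Shapiro-Shields function `f_Z`,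
written out through its cofactor expansion along the first column. -/
theorem shapiroShields_norm_sq (H : WeightedHardySpace) (n : ℕ) (z : Fin n → ℂ)
    (hz : ∀ i, ‖z i‖ < 1) (hinj : Function.Injective z)
    (k : Fin n → H.E) (hk : ∀ i, ∀ g : H.E, ⟪k i, g⟫_ℂ = H.eval g (z i)) :
    let K : Matrix (Fin n) (Fin n) ℂ := Matrix.of fun s t => H.eval (k s) (z t)
    let fZ : H.E := K.det • H.one -
      ∑ s : Fin n, (K.updateRow s (fun _ => (1 : ℂ))).det • k s
    ((‖fZ‖ : ℂ)) ^ 2 = (starRingEnd ℂ) K.det * H.eval fZ 0 := by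
  intro K fZ
  -- eval at 0 is inner with `one`
  have heval0 : ∀ f : H.E, H.eval f 0 = ⟪H.one, f⟫_ℂ := by
    intro f
    have h1 : H.eval f 0 = H.coeff f 0 * (0:ℂ) ^ 0 := by
      apply tsum_eq_single
      intro m hm
      simp [zero_pow hm]
    rw [h1]
    simp [WeightedHardySpace.coeff, WeightedHardySpace.one, H.hω0]
  -- eval of `one` is the constant 1
  have hone : ∀ w : ℂ, H.eval H.one w = 1 := by
    intro w
    have hc : ∀ m : ℕ, H.coeff H.one m = if m = 0 then 1 else 0 := by
      intro m
      simp only [WeightedHardySpace.coeff, WeightedHardySpace.one, H.horth]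
      rcases eq_or_ne m 0 with h | h
      · simp [h, H.hω0]
      · simp [h]
    have h1 : H.eval H.one w = H.coeff H.one 0 * w ^ 0 := by
      apply tsum_eq_single
      intro m hm
      simp [hc m, hm]
    rw [h1, hc 0]
    simp
  have hko : ∀ i, ⟪k i, H.one⟫_ℂ = 1 := fun i => by rw [hk i H.one, hone]
  have hKrep : ∀ i s, ⟪k i, k s⟫_ℂ = K s i := fun i s => hk i (k s)
  -- Cramer identity: ∑ s, c s * K s i = det K
  have hcramer : ∀ i, ∑ s : Fin n,
      (K.updateRow s (fun _ => (1 : ℂ))).det * K s i = K.det := by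
    intro i
    have h1 : ∀ s, (K.updateRow s (fun _ => (1 : ℂ))).det
        = Matrix.cramer K.transpose (fun _ => (1 : ℂ)) s := by
      intro s
      rw [Matrix.cramer_apply, ← Matrix.det_transpose (K.transpose.updateCol s _),
        Matrix.updateCol_transpose, Matrix.transpose_transpose]
    have h2 := congrFun (Matrix.mulVec_cramer K.transpose (fun _ => (1 : ℂ))) i
    simp only [Matrix.mulVec, dotProduct, Matrix.transpose_apply,
      Matrix.det_transpose, Pi.smul_apply, smul_eq_mul, mul_one] at h2
    calc ∑ s : Fin n, (K.updateRow s (fun _ => (1 : ℂ))).det * K s i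
        = ∑ s : Fin n, K s i * Matrix.cramer K.transpose (fun _ => (1 : ℂ)) s := by
          refine Finset.sum_congr rfl fun s _ => ?_
          rw [h1 s, mul_comm]
      _ = K.det := h2
  -- each k i is orthogonal to fZ
  have horthfZ : ∀ i, ⟪k i, fZ⟫_ℂ = 0 := by
    intro i
    show ⟪k i, K.det • H.one -
      ∑ s : Fin n, (K.updateRow s (fun _ => (1 : ℂ))).det • k s⟫_ℂ = 0
    rw [inner_sub_right, inner_smul_right, inner_sum, hko i]
    simp only [inner_smul_right, hKrep i]
    rw [← hcramer i]
    ring_nf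
  -- put it together
  have hinner : ⟪fZ, fZ⟫_ℂ = (starRingEnd ℂ) K.det * ⟪H.one, fZ⟫_ℂ := by
    conv_lhs =>
      rw [show fZ = K.det • H.one -
        ∑ s : Fin n, (K.updateRow s (fun _ => (1 : ℂ))).det • k s from rfl]
    rw [inner_sub_left, inner_smul_left, sum_inner]
    simp only [inner_smul_left, horthfZ, mul_zero, Finset.sum_const_zero, sub_zero]
    show _ = (starRingEnd ℂ) K.det * ⟪H.one, K.det • H.one -
      ∑ s : Fin n, (K.updateRow s (fun _ => (1 : ℂ))).det • k s⟫_ℂ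
    have h0 : ∀ x, ⟪k x, K.det • H.one - ∑ s : Fin n, (K.updateRow s (fun _ => (1 : ℂ))).det • k s⟫_ℂ = 0 := horthfZ
    simp only [h0, mul_zero, Finset.sum_const_zero, sub_zero]
  rw [heval0, ← hinner]
  exact (inner_self_eq_norm_sq_to_K fZ).symm
end

section
/- In the Bergman space A², for z_1 ∈ D \ {0}, the function g(z) = (1/√(2 − |z_1|²))·(conj(z_1)/|z_1|)·((z_1 − z)/(1 − conj(z_1) z))·((2 − conj(z_1) z − |z_1|²)/(1 − conj(z_1) z)) is A²-inner, and dist²_{A²}(1, [g]) = (1 − |z_1|²)². -/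
open Filter Topology
open scoped InnerProductSpace ComplexConjugate

lemma aux_one_sub_ne_zero {x : ℂ} (hx : ‖x‖ < 1) : 1 - x ≠ 0 := by
  intro h
  have hx1 : x = 1 := by linear_combination -h
  rw [hx1] at hx
  simp at hx

lemma aux_hasSum_add_two_mul_geom {x : ℂ} (hx : ‖x‖ < 1) :
    HasSum (fun k : ℕ => ((k : ℂ) + 2) * x ^ k) ((2 - x) / (1 - x) ^ 2) := by
  have h1 : (1 : ℂ) - x ≠ 0 := aux_one_sub_ne_zero hx
  have hg := hasSum_geometric_of_norm_lt_one hx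
  have hk := hasSum_coe_mul_geometric_of_norm_lt_one hx
  have h := hk.add (hg.mul_left 2)
  have hfun : (fun k : ℕ => ((k : ℂ) + 2) * x ^ k)
      = fun k : ℕ => (k : ℂ) * x ^ k + 2 * x ^ k := by
    funext k; ring
  have hval : x / (1 - x) ^ 2 + 2 * (1 - x)⁻¹ = (2 - x) / (1 - x) ^ 2 := by
    field_simp
    ring
  rw [hfun, ← hval]
  exact h

namespace WeightedHardySpace

variable (H : WeightedHardySpace)

lemma sqrt_ω_pos (k : ℕ) : 0 < Real.sqrt (H.ω k) := Real.sqrt_pos.mpr (H.hωpos k)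

lemma sqrt_ω_ne (k : ℕ) : Real.sqrt (H.ω k) ≠ 0 := ne_of_gt (H.sqrt_ω_pos k)

/-- The normalized orthonormal family. -/
noncomputable def v : ℕ → H.E := fun k => (((Real.sqrt (H.ω k))⁻¹ : ℝ) : ℂ) • H.e k

lemma invsqrt_sq (k : ℕ) :
    ((((Real.sqrt (H.ω k))⁻¹ : ℝ)) : ℂ) * ((((Real.sqrt (H.ω k))⁻¹ : ℝ)) : ℂ) * ((H.ω k : ℝ) : ℂ) = 1 := by
  have h3 := Real.mul_self_sqrt (H.hωpos k).le
  norm_cast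
  rw [← h3]
  field_simp
  rw [Real.sqrt_sq (H.sqrt_ω_pos k).le]
  exact div_self (pow_ne_zero 2 (H.sqrt_ω_ne k))

lemma v_orthonormal : Orthonormal ℂ H.v := by
  rw [orthonormal_iff_ite]
  intro i j
  simp only [v, inner_smul_left, inner_smul_right, Complex.conj_ofReal, H.horth]
  by_cases h : i = j
  · subst h
    simp only [eq_self_iff_true, if_true]
    linear_combination H.invsqrt_sq i
  · simp [h]

lemma v_dense : ⊤ ≤ (Submodule.span ℂ (Set.range H.v)).topologicalClosure := by
  have hsp : Submodule.span ℂ (Set.range H.v) = Submodule.span ℂ (Set.range H.e) := by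
    apply le_antisymm
    · rw [Submodule.span_le]
      rintro _ ⟨k, rfl⟩
      exact Submodule.smul_mem _ _ (Submodule.subset_span ⟨k, rfl⟩)
    · rw [Submodule.span_le]
      rintro _ ⟨k, rfl⟩
      have he : H.e k = (((Real.sqrt (H.ω k)) : ℝ) : ℂ) • H.v k := by
        rw [v, smul_smul]
        rw [show ((((Real.sqrt (H.ω k)) : ℝ) : ℂ) * (((Real.sqrt (H.ω k))⁻¹ : ℝ) : ℂ)) = 1 by
          norm_cast
          exact mul_inv_cancel₀ (H.sqrt_ω_ne k)]
        rw [one_smul]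
      rw [he]
      exact Submodule.smul_mem _ _ (Submodule.subset_span ⟨k, rfl⟩)
  rw [hsp, H.hdense]

/-- The associated Hilbert basis. -/
noncomputable def hb : HilbertBasis ℕ ℂ H.E := HilbertBasis.mk H.v_orthonormal H.v_dense

lemma hb_apply (k : ℕ) : H.hb k = H.v k := congrFun (HilbertBasis.coe_mk _ _) k

lemma inner_hasSum (x y : H.E) :
    HasSum (fun k => ⟪x, H.e k⟫_ℂ * ⟪H.e k, y⟫_ℂ / (H.ω k : ℂ)) ⟪x, y⟫_ℂ := by
  have h := H.hb.hasSum_inner_mul_inner x y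
  have e1 : ∀ k : ℕ, ⟪x, H.hb k⟫_ℂ * ⟪H.hb k, y⟫_ℂ
      = ⟪x, H.e k⟫_ℂ * ⟪H.e k, y⟫_ℂ / (H.ω k : ℂ) := by
    intro k
    rw [hb_apply, v, inner_smul_right, inner_smul_left, Complex.conj_ofReal]
    have hω : ((H.ω k : ℝ) : ℂ) ≠ 0 := Complex.ofReal_ne_zero.mpr (ne_of_gt (H.hωpos k))
    rw [eq_div_iff hω]
    linear_combination (⟪x, H.e k⟫_ℂ * ⟪H.e k, y⟫_ℂ) * H.invsqrt_sq k
  exact (funext e1 : _) ▸ h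

lemma hasSum_coeff_smul (x : H.E) (a : ℕ → ℂ) (h : ∀ k, ⟪H.e k, x⟫_ℂ = a k * (H.ω k : ℂ)) :
    HasSum (fun k => a k • H.e k) x := by
  have hr := H.hb.hasSum_repr x
  have e1 : ∀ k : ℕ, (H.hb.repr x) k • H.hb k = a k • H.e k := by
    intro k
    rw [HilbertBasis.repr_apply_apply, hb_apply, v, inner_smul_left, Complex.conj_ofReal, h k,
      smul_smul]
    congr 1
    linear_combination a k * H.invsqrt_sq k
  exact (funext e1 : _) ▸ hr

lemma pow_shift (j k : ℕ) : (H.S ^ j) (H.e k) = H.e (k + j) := by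
  induction j generalizing k with
  | zero => simp
  | succ n ih =>
      rw [pow_succ, ContinuousLinearMap.mul_apply, H.hshift, ih (k+1)]
      congr 1
      omega

end WeightedHardySpace

set_option maxHeartbeats 2000000 in
/-- In the Bergman space `A²` (weights `ω_k = 1/(k+1)`), the single-point extremal
function is `A²`-inner and `dist²(1, [g]) = (1 - |z₁|²)²`. -/
theorem bergman_single_point (H : WeightedHardySpace)
    (hω : ∀ m : ℕ, H.ω m = 1 / (m + 1)) (z1 : ℂ) (hz1 : ‖z1‖ < 1) (hz10 : z1 ≠ 0)
    (g : H.E)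
    (hg : ∀ w : ℂ, ‖w‖ < 1 →
      H.eval g w = (((Real.sqrt (2 - ‖z1‖ ^ 2))⁻¹ : ℝ) : ℂ) *
        ((starRingEnd ℂ) z1 / (‖z1‖ : ℂ)) *
        ((z1 - w) / (1 - (starRingEnd ℂ) z1 * w)) *
        ((2 - (starRingEnd ℂ) z1 * w - ((‖z1‖ ^ 2 : ℝ) : ℂ)) / (1 - (starRingEnd ℂ) z1 * w))) :
    H.IsInner g ∧
      (Metric.infDist H.one (H.genSub g : Set H.E)) ^ 2 = (1 - ‖z1‖ ^ 2) ^ 2 := by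
  classical
  set s : ℝ := ‖z1‖ ^ 2 with hs_def
  have hz1n : 0 < ‖z1‖ := norm_pos_iff.mpr hz10
  have hs0 : 0 < s := by rw [hs_def]; positivity
  have hs1 : s < 1 := by rw [hs_def]; nlinarith
  have h2s : (0:ℝ) < 2 - s := by linarith
  set sC : ℂ := ((s : ℝ) : ℂ) with hsC_def
  set b : ℂ := (starRingEnd ℂ) z1 with hbdef
  set c : ℂ := (((Real.sqrt (2 - s))⁻¹ : ℝ) : ℂ) * (b / ((‖z1‖ : ℝ) : ℂ)) with hcdef
  have h1sC : (1:ℂ) - sC ≠ 0 := by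
    rw [hsC_def, show (1:ℂ) - ((s:ℝ):ℂ) = (((1 - s : ℝ)):ℂ) by push_cast; ring]
    exact Complex.ofReal_ne_zero.mpr (by linarith)
  have h2sC : (2:ℂ) - sC ≠ 0 := by
    rw [hsC_def, show (2:ℂ) - ((s:ℝ):ℂ) = (((2 - s : ℝ)):ℂ) by push_cast; ring]
    exact Complex.ofReal_ne_zero.mpr (by linarith)
  have hsCnorm : ‖sC‖ < 1 := by
    rw [hsC_def, Complex.norm_real, Real.norm_eq_abs, abs_of_pos hs0]; exact hs1
  have hzb : z1 * b = sC := by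
    rw [hbdef, hsC_def, Complex.mul_conj', hs_def]; push_cast; ring
  have hnb : ‖b‖ = ‖z1‖ := by rw [hbdef]; exact RCLike.norm_conj z1
  have hb1 : ‖b‖ < 1 := by rw [hnb]; exact hz1
  have hbne : b ≠ 0 := by rw [hbdef]; simpa using hz10
  have hconjb : (starRingEnd ℂ) b = z1 := by rw [hbdef, Complex.conj_conj]
  have hYne : ((‖z1‖:ℝ):ℂ) ≠ 0 := Complex.ofReal_ne_zero.mpr (ne_of_gt hz1n)
  have hss : ((‖z1‖:ℝ):ℂ) * ((‖z1‖:ℝ):ℂ) = sC := by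
    rw [hsC_def, hs_def]; push_cast; ring
  have hsqrt : (((Real.sqrt (2-s))⁻¹:ℝ):ℂ) * (((Real.sqrt (2-s))⁻¹:ℝ):ℂ) = ((2:ℂ) - sC)⁻¹ := by
    rw [hsC_def, show ((2:ℂ) - ((s:ℝ):ℂ)) = (((2 - s:ℝ)):ℂ) by push_cast; ring,
      ← Complex.ofReal_inv, ← Complex.ofReal_mul]
    norm_cast
    rw [← mul_inv, inv_inj]
    exact Real.mul_self_sqrt h2s.le
  have hsCne : sC ≠ 0 := by
    rw [hsC_def]; exact Complex.ofReal_ne_zero.mpr (ne_of_gt hs0)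
  have hinv2 : ((2:ℂ) - sC) * ((2:ℂ) - sC)⁻¹ = 1 := mul_inv_cancel₀ h2sC
  have hcc : (starRingEnd ℂ) c * c = ((2:ℂ) - sC)⁻¹ := by
    calc (starRingEnd ℂ) c * c
        = ((((Real.sqrt (2-s))⁻¹:ℝ):ℂ) * (((Real.sqrt (2-s))⁻¹:ℝ):ℂ))
          * ((z1 * b) / (((‖z1‖:ℝ):ℂ) * ((‖z1‖:ℝ):ℂ))) := by
          rw [hcdef, map_mul, map_div₀, Complex.conj_ofReal, Complex.conj_ofReal, hconjb]
          ring
      _ = ((2:ℂ) - sC)⁻¹ * (sC / sC) := by rw [hzb, hss, hsqrt]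
      _ = ((2:ℂ) - sC)⁻¹ := by rw [div_self hsCne, mul_one]
  set a : ℕ → ℂ :=
    fun k => Nat.casesOn k (c * z1 * (2 - sC))
      (fun n => -c * ((1:ℂ) - sC)^2 * ((n:ℂ) + 2) * b ^ n) with hadef
  have ha0 : a 0 = c * z1 * (2 - sC) := rfl
  have haS : ∀ n : ℕ, a (n+1) = -c * ((1:ℂ) - sC)^2 * ((n:ℂ) + 2) * b ^ n := fun n => rfl
  clear_value sC b c a
  have hωC : ∀ m : ℕ, (H.ω m : ℂ) = ((m:ℂ) + 1)⁻¹ := by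
    intro m; rw [hω m]; push_cast; rw [one_div]
  have hωne : ∀ m : ℕ, (H.ω m : ℂ) ≠ 0 :=
    fun m => by rw [hωC m]; exact inv_ne_zero (Nat.cast_add_one_ne_zero m)
  -- Step A: explicit power series sums to eval g
  have hA : ∀ w : ℂ, ‖w‖ < 1 → HasSum (fun k => a k * w ^ k) (H.eval g w) := by
    intro w hw
    have hbw : ‖b * w‖ < 1 := by
      rw [norm_mul, hnb]; nlinarith [norm_nonneg w, norm_nonneg z1]
    have hd : (1:ℂ) - b * w ≠ 0 := aux_one_sub_ne_zero hbw
    have h1 := (aux_hasSum_add_two_mul_geom hbw).mul_left (-c * ((1:ℂ) - sC)^2 * w)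
    rw [show (fun k : ℕ => (-c * ((1:ℂ)-sC)^2 * w) * (((k:ℂ)+2) * (b*w)^k))
        = fun k : ℕ => a (k+1) * w^(k+1) by funext k; rw [haS k, mul_pow]; ring] at h1
    have h3 : HasSum (fun k => a k * w ^ k)
        (a 0 * w ^ 0 + (-c * ((1:ℂ)-sC)^2 * w) * ((2 - b*w)/(1 - b*w)^2)) := by
      refine (hasSum_nat_add_iff' 1).mp ?_
      convert h1 using 1
      · rfl
      simp
    convert h3 using 1
    rw [hg w hw, ha0, pow_zero, mul_one]
    rw [← hzb, div_eq_mul_inv _ ((1 - b * w) ^ 2), ← inv_pow]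
    have hI : (1 - b * w) * (1 - b * w)⁻¹ = 1 := mul_inv_cancel₀ hd
    linear_combination (c * z1 * (2 - z1 * b) * (1 + (1 - b * w)⁻¹ * (1 - b * w))) * hI
  -- summability of coefficient series
  have hbound : ∀ k : ℕ, ‖H.coeff g k‖ ≤ ‖g‖ * ((k:ℝ)+1) := by
    intro k
    rw [WeightedHardySpace.coeff, norm_div]
    have h1 : ‖⟪H.e k, g⟫_ℂ‖ ≤ ‖H.e k‖ * ‖g‖ := norm_inner_le_norm _ _
    have hkpos : (0:ℝ) < (k:ℝ) + 1 := by positivity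
    have he2 : ‖H.e k‖ ^ 2 = H.ω k := by
      have h := inner_self_eq_norm_sq (𝕜 := ℂ) (H.e k)
      rw [H.horth k k, if_pos rfl] at h
      simp only [RCLike.re_to_complex, Complex.ofReal_re] at h
      linarith [h]
    have hωk : H.ω k = 1/((k:ℝ)+1) := hω k
    have hωk1 : H.ω k ≤ 1 := by
      rw [hωk, div_le_one hkpos]; linarith
    have he1 : ‖H.e k‖ ≤ 1 := by
      nlinarith [norm_nonneg (H.e k), he2, hωk1]
    have hnorm : ‖((H.ω k:ℝ):ℂ)‖ = 1/((k:ℝ)+1) := by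
      rw [Complex.norm_real, Real.norm_eq_abs, hωk, abs_of_pos (by positivity)]
    rw [hnorm, div_div_eq_mul_div, div_one]
    have h2 : ‖⟪H.e k, g⟫_ℂ‖ ≤ ‖g‖ := by nlinarith [norm_nonneg g]
    exact mul_le_mul_of_nonneg_right h2 hkpos.le
  have hsum_coeff : ∀ w : ℂ, ‖w‖ < 1 → Summable (fun k => H.coeff g k * w ^ k) := by
    intro w hw
    have hw' : ‖(‖w‖)‖ < 1 := by
      rw [Real.norm_eq_abs, abs_of_nonneg (norm_nonneg w)]; exact hw
    have h2 := summable_pow_mul_geometric_of_norm_lt_one 1 hw'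
    have h3 := summable_geometric_of_lt_one (norm_nonneg w) hw
    have h4 : Summable (fun k : ℕ => ‖g‖ * (((k:ℝ)+1) * ‖w‖^k)) := by
      apply Summable.mul_left
      exact (h2.add h3).congr (fun k => by push_cast; ring)
    apply Summable.of_norm_bounded h4
    intro k
    rw [norm_mul, norm_pow]
    calc ‖H.coeff g k‖ * ‖w‖^k ≤ (‖g‖ * ((k:ℝ)+1)) * ‖w‖^k :=
          mul_le_mul_of_nonneg_right (hbound k) (by positivity)
      _ = ‖g‖ * (((k:ℝ)+1) * ‖w‖^k) := by ring
  have hcoeffSum : ∀ w : ℂ, ‖w‖ < 1 → HasSum (fun k => H.coeff g k * w ^ k) (H.eval g w) := by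
    intro w hw
    exact (hsum_coeff w hw).hasSum
  -- the difference sequence vanishes
  set d : ℕ → ℂ := fun k => H.coeff g k - a k with hddef
  clear_value d
  have hdsum0 : ∀ w : ℂ, ‖w‖ < 1 → HasSum (fun k => d k * w ^ k) 0 := by
    intro w hw
    have h := (hcoeffSum w hw).sub (hA w hw)
    rw [sub_self] at h
    convert h using 1
    · rfl
    funext k
    rw [hddef]
    ring
  have hanorm : ∀ k : ℕ, ‖a k‖ ≤ (‖a 0‖ + ‖c‖*(1-s)^2) * ((k:ℝ)+1) := by
    intro k
    cases k with
    | zero =>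
        simp only [Nat.cast_zero, zero_add, mul_one]
        nlinarith [mul_nonneg (norm_nonneg c) (sq_nonneg (1-s))]
    | succ n =>
        have h1 : ‖a (n+1)‖ = ‖c‖ * ‖(1:ℂ)-sC‖^2 * ‖((n:ℂ)+2)‖ * ‖b‖^n := by
          rw [haS n, norm_mul, norm_mul, norm_mul, norm_neg, norm_pow, norm_pow]
        have h2 : ‖((n:ℂ)+2)‖ = (n:ℝ)+2 := by
          rw [show ((n:ℂ)+2) = ((((n:ℝ)+2 : ℝ)):ℂ) by push_cast; ring, Complex.norm_real,
            Real.norm_eq_abs, abs_of_pos (by positivity)]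
        have h3 : ‖b‖^n ≤ 1 := pow_le_one₀ (norm_nonneg b) hb1.le
        have h4 : ‖(1:ℂ)-sC‖ = 1-s := by
          rw [hsC_def, show (1:ℂ) - ((s:ℝ):ℂ) = (((1-s:ℝ)):ℂ) by push_cast; ring,
            Complex.norm_real, Real.norm_eq_abs, abs_of_pos (by linarith)]
        rw [h1, h2, h4]
        push_cast
        have h5 : (0:ℝ) ≤ ‖c‖ * (1-s)^2 * ((n:ℝ)+2) := by positivity
        have h6 : ‖c‖ * (1-s)^2 * ((n:ℝ)+2) * ‖b‖^n ≤ ‖c‖ * (1-s)^2 * ((n:ℝ)+2) * 1 := by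
          apply mul_le_mul_of_nonneg_left h3 h5
        nlinarith [norm_nonneg (a 0), h6]
  have hDsum : Summable (fun k => ‖d k‖ * (1/2:ℝ)^k) := by
    have hdb : ∀ k : ℕ, ‖d k‖ * (1/2:ℝ)^k
        ≤ (‖g‖ + (‖a 0‖ + ‖c‖*(1-s)^2)) * (((k:ℝ)+1) * (1/2:ℝ)^k) := by
      intro k
      have h1 : ‖d k‖ ≤ ‖H.coeff g k‖ + ‖a k‖ := by
        rw [hddef]; exact norm_sub_le _ _
      have h2 := hbound k
      have h3 := hanorm k
      have hp : (0:ℝ) ≤ (1/2:ℝ)^k := by positivity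
      calc ‖d k‖ * (1/2:ℝ)^k
          ≤ ((‖g‖ * ((k:ℝ)+1)) + (‖a 0‖ + ‖c‖*(1-s)^2) * ((k:ℝ)+1)) * (1/2:ℝ)^k :=
            mul_le_mul_of_nonneg_right (by linarith) hp
        _ = (‖g‖ + (‖a 0‖ + ‖c‖*(1-s)^2)) * (((k:ℝ)+1) * (1/2:ℝ)^k) := by ring
    apply Summable.of_nonneg_of_le (fun k => by positivity) hdb
    apply Summable.mul_left
    have h2 := summable_pow_mul_geometric_of_norm_lt_one 1
      (r := (1/2:ℝ)) (by rw [Real.norm_eq_abs, abs_of_pos (by norm_num : (0:ℝ) < 1/2)]; norm_num)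
    have h3 := summable_geometric_of_lt_one (by norm_num : (0:ℝ) ≤ 1/2) (by norm_num)
    exact (h2.add h3).congr (fun k => by push_cast; ring)
  have hd0 : ∀ n, d n = 0 := by
    intro n
    induction n using Nat.strong_induction_on with
    | _ n IH =>
    have hMsummable : Summable (fun i : ℕ => ‖d (i + (n+1))‖ * (1/2:ℝ)^i) := by
      have h1 := (summable_nat_add_iff (n+1)).mpr hDsum
      have h2 := h1.mul_left ((2:ℝ)^(n+1))
      apply h2.congr
      intro i
      rw [show (1/2:ℝ)^(i+(n+1)) = (1/2)^i * (1/2)^(n+1) from pow_add _ _ _,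
        show (2:ℝ)^(n+1) * (‖d (i + (n+1))‖ * ((1/2:ℝ)^i * (1/2)^(n+1)))
          = ‖d (i+(n+1))‖ * (1/2)^i * ((2:ℝ)^(n+1) * (1/2)^(n+1)) by ring, ← mul_pow]
      norm_num
    set M : ℝ := ∑' i : ℕ, ‖d (i + (n+1))‖ * (1/2:ℝ)^i with hM
    have hM0 : 0 ≤ M := tsum_nonneg (fun i => by positivity)
    have key : ∀ ε : ℝ, 0 < ε → ε ≤ 1/2 → ‖d n‖ ≤ ε * M := by
      intro ε hε hε2
      set w : ℂ := (ε : ℂ) with hwdef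
      have hwn : ‖w‖ = ε := by rw [hwdef, Complex.norm_real, Real.norm_eq_abs, abs_of_pos hε]
      have hw1 : ‖w‖ < 1 := by rw [hwn]; linarith
      have hw0 : w ≠ 0 := by rw [hwdef]; exact Complex.ofReal_ne_zero.mpr (ne_of_gt hε)
      have hsum := hdsum0 w hw1
      have hsummable := hsum.summable
      have htsum0 : ∑' k, d k * w^k = 0 := hsum.tsum_eq
      have hsplit := Summable.sum_add_tsum_nat_add (f := fun k => d k * w^k) n hsummable
      have hfin : ∑ i ∈ Finset.range n, d i * w^i = 0 :=
        Finset.sum_eq_zero (fun i hi => by rw [IH i (Finset.mem_range.mp hi), zero_mul])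
      rw [hfin, htsum0, zero_add] at hsplit
      have h5 : ∑' i : ℕ, d (i+n) * w ^ i = 0 := by
        have he : (fun i : ℕ => d (i+n) * w^(i+n)) = fun i : ℕ => w^n * (d (i+n) * w^i) := by
          funext i; rw [pow_add]; ring
        rw [he, tsum_mul_left] at hsplit
        rcases mul_eq_zero.mp hsplit with h|h
        · exact absurd h (pow_ne_zero _ hw0)
        · exact h
      have htail_summable : Summable (fun i : ℕ => d (i+n) * w^i) := by
        have h1 := (summable_nat_add_iff (f := fun k => d k * w^k) n).mpr hsummable
        have he : (fun i : ℕ => d (i+n) * w^(i+n)) = fun i : ℕ => w^n * (d (i+n) * w^i) := by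
          funext i; rw [pow_add]; ring
        rw [he] at h1
        exact (summable_mul_left_iff (pow_ne_zero n hw0)).mp h1
      have h6 := Summable.sum_add_tsum_nat_add (f := fun i : ℕ => d (i+n) * w^i) 1 htail_summable
      rw [h5] at h6
      have h7 : d n = -∑' i : ℕ, d (i+1+n) * w^(i+1) := by
        have h8 : d (0+n) * w^0 + ∑' i : ℕ, d (i+1+n) * w^(i+1) = 0 := by
          simpa using h6
        simp only [zero_add, pow_zero, mul_one] at h8
        linear_combination h8
      have hterm : ∀ i : ℕ, ‖d (i+1+n) * w^(i+1)‖ ≤ ε * (‖d (i+(n+1))‖ * (1/2:ℝ)^i) := by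
        intro i
        rw [norm_mul, norm_pow, hwn, show i+1+n = i+(n+1) by omega]
        have h10 : ε^(i+1) ≤ ε * (1/2:ℝ)^i := by
          have h11 : ε^i ≤ (1/2:ℝ)^i := pow_le_pow_left₀ hε.le hε2 i
          calc ε^(i+1) = ε * ε^i := by ring
            _ ≤ ε * (1/2:ℝ)^i := by nlinarith [pow_nonneg hε.le i]
        have := mul_le_mul_of_nonneg_left h10 (norm_nonneg (d (i+(n+1))))
        calc ‖d (i+(n+1))‖ * ε^(i+1) ≤ ‖d (i+(n+1))‖ * (ε * (1/2:ℝ)^i) := this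
          _ = ε * (‖d (i+(n+1))‖ * (1/2:ℝ)^i) := by ring
      have hnormsum : Summable (fun i : ℕ => ‖d (i+1+n) * w^(i+1)‖) :=
        Summable.of_nonneg_of_le (fun i => norm_nonneg _) hterm (hMsummable.mul_left ε)
      have h8 : ‖d n‖ ≤ ∑' i : ℕ, ‖d (i+1+n) * w^(i+1)‖ := by
        rw [h7, norm_neg]
        exact norm_tsum_le_tsum_norm hnormsum
      have h9 : ∑' i : ℕ, ‖d (i+1+n) * w^(i+1)‖ ≤ ε * M := by
        rw [hM, ← tsum_mul_left]
        exact Summable.tsum_le_tsum hterm hnormsum (hMsummable.mul_left ε)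
      linarith
    by_contra hne
    have hpos : 0 < ‖d n‖ := norm_pos_iff.mpr hne
    have h12 : (0:ℝ) < M + 1 := by linarith
    have hεs := key (min (1/2) (‖d n‖ / (2*(M+1)))) (by positivity) (min_le_left _ _)
    have h11 : min (1/2) (‖d n‖ / (2*(M+1))) ≤ ‖d n‖ / (2*(M+1)) := min_le_right _ _
    have h13 : ‖d n‖ ≤ (‖d n‖ / (2*(M+1))) * M := by
      calc ‖d n‖ ≤ min (1/2) (‖d n‖/(2*(M+1))) * M := hεs
        _ ≤ (‖d n‖/(2*(M+1))) * M := mul_le_mul_of_nonneg_right h11 hM0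
    rw [div_mul_eq_mul_div, le_div_iff₀ (by linarith)] at h13
    nlinarith
  have hcoeff : ∀ k, ⟪H.e k, g⟫_ℂ = a k * (H.ω k : ℂ) := by
    intro k
    have h1 : H.coeff g k = a k := by
      have := hd0 k; rwa [hddef, sub_eq_zero] at this
    rw [WeightedHardySpace.coeff] at h1
    rw [← h1, div_mul_cancel₀ _ (hωne k)]
  have hgrep : HasSum (fun k => a k • H.e k) g := H.hasSum_coeff_smul g a hcoeff
  -- coefficients of S^j g
  have hSj : ∀ j m : ℕ, ⟪H.e m, (H.S ^ j) g⟫_ℂ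
      = if j ≤ m then a (m - j) * (H.ω m : ℂ) else 0 := by
    intro j m
    have h1 : HasSum (fun k => a k • H.e (k + j)) ((H.S ^ j) g) := by
      have h2 := hgrep.mapL (H.S ^ j)
      have he : (fun k => (H.S ^ j) (a k • H.e k)) = fun k => a k • H.e (k + j) := by
        funext k; rw [map_smul, H.pow_shift]
      rw [he] at h2; exact h2
    have h2 := h1.mapL (innerSL ℂ (H.e m))
    simp only [innerSL_apply_apply] at h2
    by_cases hjm : j ≤ m
    · rw [if_pos hjm]
      have he : (fun k => ⟪H.e m, a k • H.e (k+j)⟫_ℂ)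
          = fun k => if k = m - j then a (m-j) * (H.ω m : ℂ) else 0 := by
        funext k
        rw [inner_smul_right, H.horth]
        by_cases hk : k = m - j
        · subst hk
          rw [if_pos (by omega : m = m - j + j), if_pos rfl,
            show m - j + j = m from by omega]
        · rw [if_neg (by omega : ¬ m = k + j), if_neg hk, mul_zero]
      rw [he] at h2
      exact h2.unique (hasSum_ite_eq (m-j) _)
    · rw [if_neg hjm]
      have he : (fun k => ⟪H.e m, a k • H.e (k+j)⟫_ℂ) = fun _ => (0:ℂ) := by
        funext k
        rw [inner_smul_right, H.horth, if_neg (by omega : ¬ m = k + j), mul_zero]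
      rw [he] at h2
      exact h2.unique hasSum_zero
  -- inner products ⟪S^j g, g⟫
  have hconj2sC : (starRingEnd ℂ) (2 - sC) = 2 - sC := by
    rw [hsC_def]; simp [map_sub, Complex.conj_ofReal, map_ofNat]
  have ha0sq : (starRingEnd ℂ) (a 0) * a 0 = sC * (2 - sC) := by
    rw [ha0, map_mul, map_mul, ← hbdef, hconj2sC]
    calc (starRingEnd ℂ) c * b * (2 - sC) * (c * z1 * (2 - sC))
        = ((starRingEnd ℂ) c * c) * (z1 * b) * (2 - sC)^2 := by ring
      _ = ((2:ℂ) - sC)⁻¹ * sC * (2 - sC)^2 := by rw [hcc, hzb]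
      _ = sC * (2 - sC) := by linear_combination sC*(2-sC)*hinv2
  have hω0C : (H.ω 0 : ℂ) = 1 := by rw [H.hω0]; simp
  have hT : ∀ j : ℕ, ⟪(H.S ^ j) g, g⟫_ℂ = (if j = 0 then 1 else 0) := by
    intro j
    have h1 := H.inner_hasSum ((H.S ^ j) g) g
    have h4 := (hasSum_nat_add_iff'
      (f := fun m => ⟪(H.S^j) g, H.e m⟫_ℂ * ⟪H.e m, g⟫_ℂ / (H.ω m : ℂ)) j).mpr h1
    have hzero : ∑ i ∈ Finset.range j,
        ⟪(H.S^j) g, H.e i⟫_ℂ * ⟪H.e i, g⟫_ℂ / (H.ω i : ℂ) = 0 := by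
      apply Finset.sum_eq_zero
      intro i hi
      have hij := Finset.mem_range.mp hi
      rw [← inner_conj_symm, hSj j i, if_neg (by omega)]
      simp
    rw [hzero, sub_zero] at h4
    have he : (fun k => ⟪(H.S^j) g, H.e (k+j)⟫_ℂ * ⟪H.e (k+j), g⟫_ℂ / (H.ω (k+j) : ℂ))
        = fun k => (starRingEnd ℂ) (a k) * a (k+j) * (H.ω (k+j) : ℂ) := by
      funext k
      rw [← inner_conj_symm, hSj j (k+j), if_pos (by omega), hcoeff (k+j),
        show k + j - j = k by omega, map_mul, Complex.conj_ofReal]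
      rw [div_eq_iff (hωne (k+j))]
      ring
    rw [he] at h4
    have h5 : HasSum (fun k => (starRingEnd ℂ) (a k) * a (k+j) * (H.ω (k+j) : ℂ))
        ((starRingEnd ℂ) (a 0) * a (0+j) * (H.ω (0+j) : ℂ)
          + ((starRingEnd ℂ) c * c) * ((1:ℂ)-sC)^4 * b^j * ((2 - sC)/(1 - sC)^2)) := by
      have h6 := (aux_hasSum_add_two_mul_geom hsCnorm).mul_left
        (((starRingEnd ℂ) c * c) * ((1:ℂ)-sC)^4 * b^j)
      have he2 : (fun k : ℕ => (((starRingEnd ℂ) c * c) * ((1:ℂ)-sC)^4 * b^j)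
            * (((k:ℂ)+2) * sC^k))
          = fun k => (starRingEnd ℂ) (a (k+1)) * a ((k+1)+j) * (H.ω ((k+1)+j) : ℂ) := by
        funext k
        have hknz : ((k:ℂ) + (j:ℂ) + 2) ≠ 0 := by
          intro hcon
          have hc2 : ((k+j+2:ℕ):ℂ) = 0 := by push_cast; linear_combination hcon
          exact (Nat.cast_ne_zero.mpr (by omega : k+j+2 ≠ 0)) hc2
        have hI : ((k:ℂ) + (j:ℂ) + 2) * ((k:ℂ) + (j:ℂ) + 2)⁻¹ = 1 := mul_inv_cancel₀ hknz
        have hωinv : (H.ω ((k+j)+1) : ℂ) = ((k:ℂ) + (j:ℂ) + 2)⁻¹ := by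
          rw [hωC ((k+j)+1)]
          congr 1
          push_cast
          ring
        have hconj : (starRingEnd ℂ) (-c * ((1:ℂ)-sC)^2 * ((k:ℂ)+2) * b^k)
            = -(starRingEnd ℂ) c * ((1:ℂ)-sC)^2 * ((k:ℂ)+2) * z1^k := by
          simp only [map_mul, map_neg, map_pow, hconjb, map_sub, map_one, map_ofNat, map_add,
            map_natCast]
          rw [hsC_def, Complex.conj_ofReal]
        have hzbk : z1^k * b^k = sC^k := by rw [← mul_pow, hzb]
        rw [show (k+1)+j = (k+j)+1 by omega, haS k, haS (k+j), hωinv, hconj, ← hzbk]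
        push_cast
        linear_combination (-((starRingEnd ℂ) c * c * ((1:ℂ)-sC)^4 * ((k:ℂ)+2)
          * z1^k * b^k * b^j)) * hI
      rw [he2] at h6
      refine (hasSum_nat_add_iff' 1).mp ?_
      convert h6 using 1
      · rfl
      simp
    have h7 := h4.unique h5
    rw [h7]
    cases j with
    | zero =>
        rw [if_pos rfl]
        rw [show (0:ℕ)+0 = 0 from rfl] at *
        rw [ha0sq, hω0C, hcc, pow_zero, mul_one, mul_one, div_eq_mul_inv]
        have hinv1 : ((1:ℂ)-sC)^2 * (((1:ℂ)-sC)^2)⁻¹ = 1 := mul_inv_cancel₀ (pow_ne_zero 2 h1sC)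
        linear_combination ((((1:ℂ)-sC)^2)⁻¹ * ((1:ℂ)-sC)^4) * hinv2 + (((1:ℂ)-sC)^2) * hinv1
    | succ i =>
        rw [if_neg (by omega)]
        have hconj_a0 : (starRingEnd ℂ) (a 0) = (starRingEnd ℂ) c * b * (2 - sC) := by
          rw [ha0, map_mul, map_mul, ← hbdef, hconj2sC]
        have hinz : ((i:ℂ)+2) ≠ 0 := by
          intro hcon
          have hc2 : ((i+2:ℕ):ℂ) = 0 := by push_cast; linear_combination hcon
          exact (Nat.cast_ne_zero.mpr (by omega : i+2 ≠ 0)) hc2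
        have hωi : (H.ω (0+(i+1)) : ℂ) = ((i:ℂ)+2)⁻¹ := by
          rw [hωC]
          congr 1
          push_cast
          ring
        rw [show (0:ℕ)+(i+1) = i+1 by omega] at *
        rw [hωi, hconj_a0, haS i, pow_succ, div_eq_mul_inv]
        have hinv1 : ((1:ℂ)-sC)^2 * (((1:ℂ)-sC)^2)⁻¹ = 1 := mul_inv_cancel₀ (pow_ne_zero 2 h1sC)
        have hIi : ((i:ℂ)+2) * ((i:ℂ)+2)⁻¹ = 1 := mul_inv_cancel₀ hinz
        linear_combination
          (-((starRingEnd ℂ) c * c * b * b^i * (2-sC) * ((1:ℂ)-sC)^2)) * hIi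
          + ((starRingEnd ℂ) c * c * b * b^i * (2-sC) * ((1:ℂ)-sC)^2) * hinv1
  have hgg : ⟪g, g⟫_ℂ = 1 := by
    have := hT 0
    simpa using this
  have hng : ‖g‖ = 1 := by
    have h1 := inner_self_eq_norm_sq (𝕜 := ℂ) g
    rw [hgg] at h1
    simp at h1
    nlinarith [norm_nonneg g]
  -- distance computation
  have hconj2sC : (starRingEnd ℂ) (2 - sC) = 2 - sC := by
    rw [hsC_def]; simp [map_sub, Complex.conj_ofReal, map_ofNat]
  have ha0sq : (starRingEnd ℂ) (a 0) * a 0 = sC * (2 - sC) := by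
    rw [ha0, map_mul, map_mul, ← hbdef, hconj2sC]
    calc (starRingEnd ℂ) c * b * (2 - sC) * (c * z1 * (2 - sC))
        = ((starRingEnd ℂ) c * c) * (z1 * b) * (2 - sC)^2 := by ring
      _ = ((2:ℂ) - sC)⁻¹ * sC * (2 - sC)^2 := by rw [hcc, hzb]
      _ = sC * (2 - sC) := by linear_combination sC*(2-sC)*hinv2
  set v0 : H.E := H.one - (starRingEnd ℂ) (a 0) • g with hv0def
  clear_value v0
  have hv_inner_S : ∀ i : ℕ, ⟪v0, (H.S ^ i) g⟫_ℂ = 0 := by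
    intro i
    rw [hv0def, inner_sub_left, inner_smul_left, Complex.conj_conj]
    rw [show ⟪H.one, (H.S ^ i) g⟫_ℂ = if i ≤ 0 then a (0 - i) * (H.ω 0 : ℂ) else 0 from by
      rw [WeightedHardySpace.one]; exact hSj i 0]
    rw [show ⟪g, (H.S ^ i) g⟫_ℂ = (starRingEnd ℂ) ⟪(H.S ^ i) g, g⟫_ℂ from
      (inner_conj_symm _ _).symm]
    rw [hT i]
    cases i with
    | zero => simp [hω0C]
    | succ m => simp
  have hv_orth : ∀ x ∈ H.genSub g, ⟪v0, x⟫_ℂ = 0 := by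
    intro x hx
    have hker : H.genSub g ≤ (innerSL ℂ v0).ker := by
      unfold WeightedHardySpace.genSub
      apply Submodule.topologicalClosure_minimal
      · rw [Submodule.span_le]
        rintro _ ⟨p, rfl⟩
        simp only [SetLike.mem_coe, LinearMap.mem_ker]
        show (innerSL ℂ v0) (H.polyMul p g) = 0
        rw [innerSL_apply_apply, WeightedHardySpace.polyMul, inner_sum]
        refine Finset.sum_eq_zero (fun i _ => ?_)
        rw [inner_smul_right, hv_inner_S i, mul_zero]
      · exact ContinuousLinearMap.isClosed_ker _
    have h1 := hker hx
    rw [LinearMap.mem_ker] at h1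
    rw [← innerSL_apply_apply ℂ v0 x]
    exact h1
  have hgmem : g ∈ H.genSub g := by
    have h1 : H.polyMul 1 g = g := by
      unfold WeightedHardySpace.polyMul
      rw [show (1 : Polynomial ℂ) = Polynomial.C 1 from (Polynomial.C_1).symm]
      rw [Polynomial.support_C (one_ne_zero)]
      simp
    unfold WeightedHardySpace.genSub
    apply Submodule.le_topologicalClosure
    apply Submodule.subset_span
    exact ⟨1, h1⟩
  have hx0mem : (starRingEnd ℂ) (a 0) • g ∈ H.genSub g := Submodule.smul_mem _ _ hgmem
  have honeone : ⟪H.one, H.one⟫_ℂ = 1 := by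
    rw [WeightedHardySpace.one, H.horth]
    simp [H.hω0]
  have hg_one : ⟪g, H.one⟫_ℂ = (starRingEnd ℂ) (a 0) := by
    rw [WeightedHardySpace.one, ← inner_conj_symm, hcoeff 0]
    rw [show (H.ω 0 : ℂ) = 1 by rw [H.hω0]; simp]
    rw [mul_one]
  have hvv : ⟪v0, v0⟫_ℂ = 1 - sC * (2 - sC) := by
    have hvg : ⟪v0, g⟫_ℂ = 0 := by
      have h1 := hv_inner_S 0
      simpa using h1
    nth_rewrite 2 [hv0def]
    rw [inner_sub_right, inner_smul_right, hvg, mul_zero, sub_zero]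
    rw [hv0def, inner_sub_left, inner_smul_left, Complex.conj_conj, honeone, hg_one]
    linear_combination -ha0sq
  have hnv : ‖v0‖^2 = (1 - s)^2 := by
    have h1 := inner_self_eq_norm_sq (𝕜 := ℂ) v0
    rw [hvv] at h1
    rw [show (1:ℂ) - sC * (2 - sC) = (((1 - s*(2-s) : ℝ)):ℂ) by rw [hsC_def]; push_cast; ring] at h1
    simp only [RCLike.re_to_complex, Complex.ofReal_re] at h1
    nlinarith [h1]
  have hKne : (H.genSub g : Set H.E).Nonempty := ⟨g, hgmem⟩
  have hinf : Metric.infDist H.one (H.genSub g : Set H.E) = ‖v0‖ := by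
    have hdistx0 : dist H.one ((starRingEnd ℂ) (a 0) • g) = ‖v0‖ := by
      rw [dist_eq_norm, hv0def]
    apply le_antisymm
    · exact hdistx0 ▸ Metric.infDist_le_dist_of_mem hx0mem
    · by_contra hlt
      push_neg at hlt
      obtain ⟨y, hy, hdy⟩ := (Metric.infDist_lt_iff hKne).mp hlt
      have hu : ((starRingEnd ℂ) (a 0) • g - y) ∈ H.genSub g := Submodule.sub_mem _ hx0mem hy
      have hdec : H.one - y = v0 + ((starRingEnd ℂ) (a 0) • g - y) := by
        rw [hv0def]; abel
      have hio := hv_orth _ hu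
      have hsq : dist H.one y ^ 2 = ‖v0‖^2 + ‖(starRingEnd ℂ) (a 0) • g - y‖^2 := by
        rw [dist_eq_norm, hdec, norm_add_sq (𝕜 := ℂ), hio]
        simp
      nlinarith [norm_nonneg ((starRingEnd ℂ) (a 0) • g - y),
        dist_nonneg (x := H.one) (y := y), norm_nonneg v0, hdy, hsq]
  refine ⟨⟨hng, fun j hj => by rw [hT j, if_neg (by omega)]⟩, ?_⟩
  rw [hinf, hnv]
end

section
/- For λ ∈ D \ {0} and f(z) = (1 − z)(λ − z)/(1 − conj(λ) z) ∈ H², the optimal approximant of degree n to 1/f is p_n*(z) = conj(λ) · q_n*(z), where q_n* is the optimal approximant of degree n to 1/(1 − z) in H². -/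
open Filter Topology
open scoped InnerProductSpace ComplexConjugate

/-! ### Auxiliary material -/

open scoped NNReal ENNReal

/-- Uniqueness of power series coefficients. -/
lemma aux_coeff_unique {c : ℕ → ℂ} {C : ℝ} (hb : ∀ k, ‖c k‖ ≤ C)
    (h : ∀ w : ℂ, ‖w‖ < 1 → ∑' k, c k * w ^ k = 0) : ∀ k, c k = 0 := by
  set p := FormalMultilinearSeries.ofScalars ℂ c with hp
  have hrad : ((1/2 : ℝ≥0) : ℝ≥0∞) ≤ p.radius := by
    apply p.le_radius_of_bound C
    intro n
    rw [FormalMultilinearSeries.ofScalars_norm]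
    calc ‖c n‖ * ((1/2 : ℝ≥0) : ℝ) ^ n ≤ ‖c n‖ * 1 := by
          apply mul_le_mul_of_nonneg_left _ (norm_nonneg _)
          exact pow_le_one₀ (by norm_num) (by norm_num)
      _ ≤ C := by simpa using hb n
  have hpos : (0 : ℝ≥0∞) < p.radius := lt_of_lt_of_le (by norm_num) hrad
  have hball := p.hasFPowerSeriesOnBall hpos
  have hat : HasFPowerSeriesAt p.sum p 0 := hball.hasFPowerSeriesAt
  have hzero : p.sum =ᶠ[nhds (0:ℂ)] 0 := by
    have hmem : Metric.ball (0:ℂ) (1/2) ∈ nhds (0:ℂ) := Metric.ball_mem_nhds _ (by norm_num)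
    filter_upwards [hmem] with w hw
    have hw1 : ‖w‖ < 1 := by
      have := mem_ball_zero_iff.mp hw
      linarith
    have hsum : p.sum w = ∑' k, c k * w ^ k := by
      unfold FormalMultilinearSeries.sum
      apply tsum_congr
      intro n
      rw [FormalMultilinearSeries.ofScalars_apply_eq]
      simp [smul_eq_mul]
    simpa [hsum] using h w hw1
  have hp0 : p = 0 := (hat.congr hzero).eq_zero
  intro k
  have h2 : FormalMultilinearSeries.ofScalars ℂ c k = 0 := by rw [← hp, hp0]; rfl
  rwa [FormalMultilinearSeries.ofScalars_eq_zero] at h2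

/-- Taylor coefficients of `(1-z)(λ-z)/(1-conj λ z)`. -/
noncomputable def acoef (lam : ℂ) : ℕ → ℂ
  | 0 => lam
  | 1 => lam * conj lam - 1 - lam
  | (k+2) => (conj lam)^k * ((1 - lam * conj lam) * (1 - conj lam))

section Acoef
variable {lam : ℂ} (hlam : ‖lam‖ < 1)

include hlam in
lemma acoef_bound (k : ℕ) :
    ‖acoef lam k‖ ≤ ‖lam‖ + ‖lam * conj lam - 1 - lam‖ + ‖(1 - lam * conj lam) * (1 - conj lam)‖ := by
  have h0 : (0:ℝ) ≤ ‖lam‖ := norm_nonneg _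
  have h1 : (0:ℝ) ≤ ‖lam * conj lam - 1 - lam‖ := norm_nonneg _
  have h2 : (0:ℝ) ≤ ‖(1 - lam * conj lam) * (1 - conj lam)‖ := norm_nonneg _
  match k with
  | 0 => show ‖lam‖ ≤ _; linarith
  | 1 => show ‖lam * conj lam - 1 - lam‖ ≤ _; linarith
  | (k+2) =>
    show ‖(conj lam)^k * ((1 - lam * conj lam) * (1 - conj lam))‖ ≤ _
    rw [norm_mul, norm_pow, RCLike.norm_conj]
    have : ‖lam‖^k * ‖(1 - lam * conj lam) * (1 - conj lam)‖
        ≤ 1 * ‖(1 - lam * conj lam) * (1 - conj lam)‖ :=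
      mul_le_mul_of_nonneg_right (pow_le_one₀ h0 (le_of_lt hlam)) h2
    rw [one_mul] at this
    linarith

include hlam in
lemma one_sub_ne {w : ℂ} (hw : ‖w‖ < 1) : 1 - conj lam * w ≠ 0 := by
  intro h
  have heq : conj lam * w = 1 := by linear_combination -h
  have h2 : ‖conj lam * w‖ < 1 := by
    rw [norm_mul, RCLike.norm_conj]
    calc ‖lam‖ * ‖w‖ ≤ 1 * ‖w‖ := mul_le_mul_of_nonneg_right (le_of_lt hlam) (norm_nonneg _)
      _ = ‖w‖ := one_mul _
      _ < 1 := hw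
  rw [heq] at h2; simp at h2

include hlam in
lemma norm_lam_mul_conj : ‖lam * conj lam‖ < 1 := by
  rw [norm_mul, RCLike.norm_conj]
  calc ‖lam‖ * ‖lam‖ ≤ 1 * ‖lam‖ := mul_le_mul_of_nonneg_right (le_of_lt hlam) (norm_nonneg _)
    _ = ‖lam‖ := one_mul _
    _ < 1 := hlam

include hlam in
lemma one_sub_normsq_ne : 1 - lam * conj lam ≠ 0 := by
  intro h
  have heq : lam * conj lam = 1 := by linear_combination -h
  have := norm_lam_mul_conj hlam
  rw [heq] at this; simp at this

include hlam in
lemma acoef_hasSum {w : ℂ} (hw : ‖w‖ < 1) :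
    HasSum (fun k => acoef lam k * w ^ k)
      ((1 - w) * ((lam - w) / (1 - conj lam * w))) := by
  have hne := one_sub_ne hlam hw
  have hgeom : HasSum (fun k : ℕ => (conj lam * w) ^ k) (1 - conj lam * w)⁻¹ := by
    apply hasSum_geometric_of_norm_lt_one
    rw [norm_mul, RCLike.norm_conj]
    calc ‖lam‖ * ‖w‖ ≤ 1 * ‖w‖ := mul_le_mul_of_nonneg_right (le_of_lt hlam) (norm_nonneg _)
      _ = ‖w‖ := one_mul _
      _ < 1 := hw
  set μ := (1 - lam * conj lam) * (1 - conj lam) with hμ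
  have htail : HasSum (fun k : ℕ => acoef lam (k + 2) * w ^ (k + 2))
      (μ * w^2 * (1 - conj lam * w)⁻¹) := by
    have : HasSum (fun i => μ * w ^ 2 * (conj lam * w) ^ i) (μ * w ^ 2 * (1 - conj lam * w)⁻¹) :=
      hgeom.mul_left (μ * w^2)
    convert this using 2 with k
    show (conj lam)^k * μ * w ^ (k+2) = _
    ring
  rw [show μ * w^2 * (1 - conj lam * w)⁻¹
      = (1 - w) * ((lam - w) / (1 - conj lam * w))
        - ∑ i ∈ Finset.range 2, acoef lam i * w ^ i from by
    simp [Finset.sum_range_succ, acoef, hμ]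
    field_simp
    ring] at htail
  exact (hasSum_nat_add_iff' 2).mp htail

include hlam in
lemma R_hasSum (m : ℕ) :
    HasSum (fun t => conj (acoef lam (t + m)) * acoef lam t)
      (conj (acoef lam m) * lam
        + conj (acoef lam (1 + m)) * (lam * conj lam - 1 - lam)
        + conj ((1 - lam * conj lam) * (1 - conj lam))
            * ((1 - lam * conj lam) * (1 - conj lam)) * lam ^ m
            * (1 - lam * conj lam)⁻¹) := by
  set μ := (1 - lam * conj lam) * (1 - conj lam) with hμ
  have hgeom : HasSum (fun t : ℕ => (lam * conj lam) ^ t) (1 - lam * conj lam)⁻¹ :=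
    hasSum_geometric_of_norm_lt_one (norm_lam_mul_conj hlam)
  have htail : HasSum (fun t : ℕ => conj (acoef lam (t + 2 + m)) * acoef lam (t + 2))
      (conj μ * μ * lam ^ m * (1 - lam * conj lam)⁻¹) := by
    have h2 : HasSum (fun t => conj μ * μ * lam ^ m * (lam * conj lam) ^ t)
        (conj μ * μ * lam ^ m * (1 - lam * conj lam)⁻¹) := hgeom.mul_left (conj μ * μ * lam ^ m)
    convert h2 using 2 with t
    rw [show t + 2 + m = (t + m) + 2 from by omega]
    show conj ((conj lam)^(t+m) * μ) * ((conj lam)^t * μ) = _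
    rw [map_mul, map_pow, Complex.conj_conj]
    ring
  have hfull := (hasSum_nat_add_iff' 2).mp (by
    rw [show conj μ * μ * lam ^ m * (1 - lam * conj lam)⁻¹
        = (conj (acoef lam m) * lam
            + conj (acoef lam (1 + m)) * (lam * conj lam - 1 - lam)
            + conj μ * μ * lam ^ m * (1 - lam * conj lam)⁻¹)
          - ∑ i ∈ Finset.range 2,
              conj (acoef lam (i + m)) * acoef lam i from by
      simp [Finset.sum_range_succ, acoef]
      try ring] at htail
    exact htail)
  exact hfull

include hlam in
lemma R_zero : ∑' t, conj (acoef lam (t + 0)) * acoef lam t = 2 := by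
  rw [(R_hasSum hlam 0).tsum_eq]
  show conj lam * lam
      + conj (lam * conj lam - 1 - lam) * (lam * conj lam - 1 - lam) + _ = 2
  simp only [map_mul, map_sub, map_one, Complex.conj_conj, pow_zero]
  field_simp [one_sub_normsq_ne hlam]
  ring

include hlam in
lemma R_one : ∑' t, conj (acoef lam (t + 1)) * acoef lam t = -1 := by
  rw [(R_hasSum hlam 1).tsum_eq]
  show conj (lam * conj lam - 1 - lam) * lam
      + conj ((conj lam)^0 * ((1 - lam*conj lam)*(1 - conj lam)))
        * (lam * conj lam - 1 - lam) + _ = -1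
  simp only [map_mul, map_sub, map_one, map_pow, Complex.conj_conj, pow_zero, pow_one, one_mul]
  field_simp [one_sub_normsq_ne hlam]
  ring

include hlam in
lemma R_ge_two (m : ℕ) : ∑' t, conj (acoef lam (t + (m + 2))) * acoef lam t = 0 := by
  rw [(R_hasSum hlam (m + 2)).tsum_eq]
  have h1 : acoef lam (m + 2) = (conj lam)^m * ((1 - lam*conj lam)*(1 - conj lam)) := rfl
  have h2 : acoef lam (1 + (m + 2))
      = (conj lam)^(m+1) * ((1 - lam*conj lam)*(1 - conj lam)) := by
    rw [show 1 + (m + 2) = (m + 1) + 2 from by omega]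
    rfl
  rw [h1, h2]
  simp only [map_mul, map_sub, map_one, map_pow, Complex.conj_conj]
  field_simp [one_sub_normsq_ne hlam]
  ring

end Acoef

section Hardy

variable (H : WeightedHardySpace) (hω : ∀ m, H.ω m = 1)

include hω in
lemma aux_horth1 : ∀ j k, ⟪H.e j, H.e k⟫_ℂ = if j = k then 1 else 0 := by
  intro j k
  rw [H.horth, hω]
  norm_num

include hω in
lemma aux_honb : Orthonormal ℂ H.e := orthonormal_iff_ite.mpr (aux_horth1 H hω)

lemma aux_dense : Dense ((Submodule.span ℂ (Set.range H.e) : Submodule ℂ H.E) : Set H.E) :=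
  Submodule.dense_iff_topologicalClosure_eq_top.mpr H.hdense

include hω in
lemma aux_parseval (x y : H.E) : ⟪x, y⟫_ℂ = ∑' k, ⟪x, H.e k⟫_ℂ * ⟪H.e k, y⟫_ℂ := by
  let b : HilbertBasis ℕ ℂ H.E := HilbertBasis.mk (aux_honb H hω) (le_of_eq H.hdense.symm)
  have hb : ⇑b = H.e := HilbertBasis.coe_mk _ _
  rw [← b.tsum_inner_mul_inner x y]
  exact tsum_congr fun k => by beta_reduce; rw [congrFun hb k]

include hω in
lemma aux_inner_eS_zero (x : H.E) : ⟪H.e 0, H.S x⟫_ℂ = 0 := by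
  have hCLM : (innerSL ℂ (H.e 0)).comp H.S = 0 := by
    apply ContinuousLinearMap.ext_on (aux_dense H)
    rintro _ ⟨m, rfl⟩
    simp only [ContinuousLinearMap.comp_apply, innerSL_apply_apply, H.hshift,
      aux_horth1 H hω, ContinuousLinearMap.zero_apply]
    exact if_neg (by omega)
  have := congrArg (fun T => T x) hCLM
  simpa using this

include hω in
lemma aux_inner_eS_succ (k : ℕ) (x : H.E) : ⟪H.e (k+1), H.S x⟫_ℂ = ⟪H.e k, x⟫_ℂ := by
  have hCLM : (innerSL ℂ (H.e (k+1))).comp H.S = innerSL ℂ (H.e k) := by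
    apply ContinuousLinearMap.ext_on (aux_dense H)
    rintro _ ⟨m, rfl⟩
    simp only [ContinuousLinearMap.comp_apply, innerSL_apply_apply, H.hshift,
      aux_horth1 H hω]
    rcases eq_or_ne k m with h | h
    · simp [h]
    · rw [if_neg (by omega), if_neg h]
  have := congrArg (fun T => T x) hCLM
  simpa using this

include hω in
lemma aux_inner_e_pow (j : ℕ) : ∀ (k : ℕ) (x : H.E),
    ⟪H.e k, (H.S ^ j) x⟫_ℂ = if j ≤ k then ⟪H.e (k - j), x⟫_ℂ else 0 := by
  induction j with
  | zero => intro k x; simp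
  | succ j ih =>
    intro k x
    rw [pow_succ, ContinuousLinearMap.mul_apply, ih]
    by_cases h : j ≤ k
    · by_cases h2 : j + 1 ≤ k
      · rw [if_pos h, if_pos h2, show k - j = (k - (j+1)) + 1 from by omega,
          aux_inner_eS_succ H hω]
      · have hkj : k - j = 0 := by omega
        rw [if_pos h, if_neg h2, hkj, aux_inner_eS_zero H hω]
    · rw [if_neg h, if_neg (by omega)]

end Hardy

section Main

variable (H : WeightedHardySpace) (hω : ∀ m, H.ω m = 1)
variable {lam : ℂ} (hlam : ‖lam‖ < 1) (f : H.E)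
variable (hf : ∀ w : ℂ, ‖w‖ < 1 →
      H.eval f w = (1 - w) * ((lam - w) / (1 - (starRingEnd ℂ) lam * w)))

include hω hlam hf in
lemma aux_coeff_f (k : ℕ) : ⟪H.e k, f⟫_ℂ = acoef lam k := by
  have hnorm_e : ∀ k, ‖H.e k‖ = 1 := (aux_honb H hω).1
  have hAb : ∀ k, ‖⟪H.e k, f⟫_ℂ‖ ≤ ‖f‖ := by
    intro k
    calc ‖⟪H.e k, f⟫_ℂ‖ ≤ ‖H.e k‖ * ‖f‖ := norm_inner_le_norm _ _
      _ = ‖f‖ := by rw [hnorm_e, one_mul]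
  have hSummA : ∀ w : ℂ, ‖w‖ < 1 → Summable (fun k => ⟪H.e k, f⟫_ℂ * w ^ k) := by
    intro w hw
    apply Summable.of_norm_bounded
      ((summable_geometric_of_lt_one (norm_nonneg w) hw).mul_left ‖f‖)
    intro k
    rw [norm_mul, norm_pow]
    exact mul_le_mul_of_nonneg_right (hAb k) (by positivity)
  have hEval : ∀ w : ℂ, ‖w‖ < 1 →
      ∑' k, ⟪H.e k, f⟫_ℂ * w ^ k = (1 - w) * ((lam - w) / (1 - conj lam * w)) := by
    intro w hw
    have h1 := hf w hw
    unfold WeightedHardySpace.eval WeightedHardySpace.coeff at h1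
    simp only [hω, Complex.ofReal_one, div_one] at h1
    exact h1
  have hzero : ∀ w : ℂ, ‖w‖ < 1 → ∑' k, (⟪H.e k, f⟫_ℂ - acoef lam k) * w ^ k = 0 := by
    intro w hw
    have h2 := acoef_hasSum hlam hw
    simp_rw [sub_mul]
    rw [Summable.tsum_sub (hSummA w hw) h2.summable, hEval w hw, h2.tsum_eq, sub_self]
  have hbd : ∀ k, ‖⟪H.e k, f⟫_ℂ - acoef lam k‖
      ≤ ‖f‖ + (‖lam‖ + ‖lam * conj lam - 1 - lam‖
          + ‖(1 - lam * conj lam) * (1 - conj lam)‖) := by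
    intro k
    calc ‖⟪H.e k, f⟫_ℂ - acoef lam k‖ ≤ ‖⟪H.e k, f⟫_ℂ‖ + ‖acoef lam k‖ := norm_sub_le _ _
      _ ≤ _ := add_le_add (hAb k) (acoef_bound hlam k)
  have := aux_coeff_unique hbd hzero k
  linear_combination this

include hω hlam hf in
lemma aux_gram_le (j m : ℕ) :
    ⟪(H.S ^ j) f, (H.S ^ (j + m)) f⟫_ℂ = ∑' t, conj (acoef lam (t + m)) * acoef lam t := by
  rw [aux_parseval H hω]
  set g := fun k => ⟪(H.S ^ j) f, H.e k⟫_ℂ * ⟪H.e k, (H.S ^ (j + m)) f⟫_ℂ with hg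
  have hshifted : ∀ t, g (t + (j + m)) = conj (acoef lam (t + m)) * acoef lam t := by
    intro t
    rw [hg]
    simp only
    rw [← inner_conj_symm ((H.S ^ j) f) (H.e (t + (j+m)))]
    rw [aux_inner_e_pow H hω, aux_inner_e_pow H hω,
      if_pos (by omega : j ≤ t + (j + m)), if_pos (by omega : j + m ≤ t + (j + m)),
      show t + (j + m) - j = t + m from by omega,
      show t + (j + m) - (j + m) = t from by omega,
      aux_coeff_f H hω hlam f hf, aux_coeff_f H hω hlam f hf]
  have hzero : ∀ k ∈ Finset.range (j + m), g k = 0 := by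
    intro k hk
    rw [hg]
    simp only
    rw [aux_inner_e_pow H hω, if_neg (by
      have := Finset.mem_range.mp hk
      omega), mul_zero]
  have hsum : Summable g := by
    rw [← summable_nat_add_iff (j + m)]
    exact ((R_hasSum hlam m).summable).congr (fun t => (hshifted t).symm)
  rw [← Summable.sum_add_tsum_nat_add (j + m) hsum, Finset.sum_eq_zero hzero, zero_add]
  exact tsum_congr hshifted

include hω hlam hf in
lemma aux_gram (j i : ℕ) :
    ⟪(H.S ^ j) f, (H.S ^ i) f⟫_ℂ =
      (if i = j then 2 else 0) + (if i = j + 1 then -1 else 0)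
        + (if j = i + 1 then -1 else 0) := by
  rcases le_or_gt j i with h | h
  · obtain ⟨m, rfl⟩ : ∃ m, i = j + m := ⟨i - j, by omega⟩
    rw [aux_gram_le H hω hlam f hf j m]
    rcases m with _ | _ | m
    · rw [R_zero hlam]
      split_ifs
      all_goals try omega
      all_goals norm_num
    · rw [R_one hlam]
      split_ifs
      all_goals try omega
      all_goals norm_num
    · rw [R_ge_two hlam]
      split_ifs
      all_goals try omega
      all_goals norm_num
  · obtain ⟨m, rfl⟩ : ∃ m, j = i + (m + 1) := ⟨j - i - 1, by omega⟩
    rw [← inner_conj_symm ((H.S ^ (i + (m+1))) f), aux_gram_le H hω hlam f hf i (m + 1)]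
    rcases m with _ | m
    · rw [R_one hlam]
      simp only [map_neg, map_one]
      split_ifs
      all_goals try omega
      all_goals norm_num
    · rw [R_ge_two hlam m]
      simp only [map_zero]
      split_ifs
      all_goals try omega
      all_goals norm_num

end Main

lemma aux_polyMul_eq_range (H : WeightedHardySpace) (p : Polynomial ℂ) (x : H.E) (N : ℕ)
    (hN : p.natDegree < N) :
    H.polyMul p x = ∑ i ∈ Finset.range N, p.coeff i • ((H.S ^ i) x) := by
  unfold WeightedHardySpace.polyMul
  apply Finset.sum_subset
  · intro i hi
    rw [Finset.mem_range]
    exact lt_of_le_of_lt (Polynomial.le_natDegree_of_mem_supp i hi) hN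
  · intro i _ hi
    rw [Polynomial.notMem_support_iff.mp hi, zero_smul]

/-- For `f(z) = (1-z)(λ-z)/(1-conj λ · z)` in the Hardy space `H²`, the optimal
approximant of degree `n` to `1/f` is `conj λ` times the optimal approximant
`qₙ*(z) = ∑_{k=0}^n (1 - (k+1)/(n+2)) z^k` to `1/(1-z)`. -/
theorem optimal_approximants_blaschke_times_outer (H : WeightedHardySpace)
    (hω : ∀ m, H.ω m = 1) (lam : ℂ) (hlam : ‖lam‖ < 1) (hlam0 : lam ≠ 0)
    (f : H.E)
    (hf : ∀ w : ℂ, ‖w‖ < 1 →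
      H.eval f w = (1 - w) * ((lam - w) / (1 - (starRingEnd ℂ) lam * w))) (n : ℕ) :
    let q : Polynomial ℂ := ∑ m ∈ Finset.range (n + 1),
      Polynomial.C (1 - ((m : ℂ) + 1) / ((n : ℂ) + 2)) * Polynomial.X ^ m
    let pstar : Polynomial ℂ := Polynomial.C ((starRingEnd ℂ) lam) * q
    pstar.degree ≤ (n : ℕ) ∧
      ∀ p : Polynomial ℂ, p.degree ≤ (n : ℕ) →
        ‖H.polyMul pstar f - H.one‖ ≤ ‖H.polyMul p f - H.one‖ := by
  intro q pstar
  have hn2 : ((n : ℂ) + 2) ≠ 0 := by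
    intro h
    have h2 : ((n : ℂ) + 2) = ((n + 2 : ℕ) : ℂ) := by push_cast; ring
    rw [h2, Nat.cast_eq_zero] at h
    omega
  -- the coefficient function
  set c' : ℕ → ℂ := fun i => 1 - ((i : ℂ) + 1) / ((n : ℂ) + 2) with hc'
  have hc'n1 : c' (n + 1) = 0 := by
    rw [hc']
    simp only
    push_cast
    field_simp
    try ring
  have hq_coeff : ∀ i, q.coeff i = if i ≤ n then c' i else 0 := by
    intro i
    show (∑ m ∈ Finset.range (n + 1),
      Polynomial.C (1 - ((m : ℂ) + 1) / ((n : ℂ) + 2)) * Polynomial.X ^ m).coeff i = _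
    rw [Polynomial.finset_sum_coeff]
    simp_rw [Polynomial.coeff_C_mul_X_pow]
    rw [Finset.sum_ite_eq (Finset.range (n + 1)) i]
    simp [Nat.lt_succ_iff, hc']
  have hp_coeff : ∀ i, pstar.coeff i = conj lam * (if i ≤ n then c' i else 0) := by
    intro i
    show (Polynomial.C (conj lam) * q).coeff i = _
    rw [Polynomial.coeff_C_mul, hq_coeff]
  have hp_coeff' : ∀ i, i ≤ n + 1 → pstar.coeff i = conj lam * c' i := by
    intro i hi
    rw [hp_coeff]
    by_cases h : i ≤ n
    · rw [if_pos h]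
    · have : i = n + 1 := by omega
      rw [if_neg h, this, hc'n1, mul_zero]
  -- degree bound for pstar
  have hqdeg : q.degree ≤ (n : ℕ) := by
    apply le_trans (Polynomial.degree_sum_le _ _)
    apply Finset.sup_le
    intro m hm
    apply le_trans (Polynomial.degree_mul_le _ _)
    calc (Polynomial.C (1 - ((m : ℂ) + 1) / ((n : ℂ) + 2))).degree
          + (Polynomial.X ^ m : Polynomial ℂ).degree
        ≤ 0 + (m : ℕ) := by
          apply add_le_add Polynomial.degree_C_le
          rw [Polynomial.degree_X_pow]
      _ = (m : ℕ) := zero_add _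
      _ ≤ (n : ℕ) := by
          exact_mod_cast Nat.cast_le.mpr (Nat.lt_succ_iff.mp (Finset.mem_range.mp hm))
  have hpdeg : pstar.degree ≤ (n : ℕ) := by
    apply le_trans (Polynomial.degree_mul_le _ _)
    calc (Polynomial.C (conj lam)).degree + q.degree ≤ 0 + (n : ℕ) :=
          add_le_add Polynomial.degree_C_le hqdeg
      _ = (n : ℕ) := zero_add _
  have hpnat : pstar.natDegree ≤ n := Polynomial.natDegree_le_iff_degree_le.mpr hpdeg
  refine ⟨hpdeg, ?_⟩
  intro p hpd
  have hpnat' : p.natDegree ≤ n := Polynomial.natDegree_le_iff_degree_le.mpr hpd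
  set D := H.polyMul pstar f - H.one with hD
  -- key orthogonality
  have hT : ∀ j, j ≤ n → ⟪(H.S ^ j) f, D⟫_ℂ = 0 := by
    intro j hj
    rw [hD, inner_sub_right]
    have hone : ⟪(H.S ^ j) f, H.one⟫_ℂ = if j = 0 then conj lam else 0 := by
      show ⟪(H.S ^ j) f, H.e 0⟫_ℂ = _
      rw [← inner_conj_symm ((H.S ^ j) f), aux_inner_e_pow H hω]
      by_cases h : j = 0
      · rw [if_pos (by omega), if_pos h]
        rw [show 0 - j = 0 from by omega, aux_coeff_f H hω hlam f hf]
        rfl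
      · rw [if_neg (by omega), if_neg h, map_zero]
    have hmul : ⟪(H.S ^ j) f, H.polyMul pstar f⟫_ℂ
        = ∑ i ∈ Finset.range (n + 1), pstar.coeff i *
            ((if i = j then 2 else 0) + (if i = j + 1 then -1 else 0)
              + (if j = i + 1 then -1 else 0)) := by
      rw [aux_polyMul_eq_range H pstar f (n + 1) (by omega)]
      rw [inner_sum]
      apply Finset.sum_congr rfl
      intro i _
      rw [inner_smul_right, aux_gram H hω hlam f hf j i]
    rw [hmul, hone]
    -- split the sum
    have hsplit : ∑ i ∈ Finset.range (n + 1), pstar.coeff i *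
            ((if i = j then 2 else 0) + (if i = j + 1 then -1 else 0)
              + (if j = i + 1 then -1 else 0))
        = (∑ i ∈ Finset.range (n + 1), if i = j then pstar.coeff i * 2 else 0)
          + (∑ i ∈ Finset.range (n + 1), if i = j + 1 then pstar.coeff i * (-1) else 0)
          + (∑ i ∈ Finset.range (n + 1), if j = i + 1 then pstar.coeff i * (-1) else 0) := by
      rw [← Finset.sum_add_distrib, ← Finset.sum_add_distrib]
      apply Finset.sum_congr rfl
      intro i _
      split_ifs <;> ring
    rw [hsplit]
    rw [Finset.sum_ite_eq' (Finset.range (n + 1)) j (fun i => pstar.coeff i * 2),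
      Finset.sum_ite_eq' (Finset.range (n + 1)) (j + 1) (fun i => pstar.coeff i * (-1))]
    rw [if_pos (Finset.mem_range.mpr (by omega))]
    have hterm2 : (if j + 1 ∈ Finset.range (n + 1) then pstar.coeff (j + 1) * (-1) else 0)
        = conj lam * c' (j + 1) * (-1) := by
      by_cases h : j + 1 ∈ Finset.range (n + 1)
      · rw [if_pos h, hp_coeff' (j + 1) (by omega)]
      · have : j = n := by
          have := Finset.mem_range.not.mp h
          omega
        rw [if_neg h, this, hc'n1]
        ring
    rw [hterm2, hp_coeff' j (by omega)]
    -- third sum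
    match j with
    | 0 =>
      rw [Finset.sum_eq_zero (fun i _ => by rw [if_neg (by omega)])]
      rw [if_pos rfl]
      rw [hc']
      simp only
      push_cast
      field_simp
      ring
    | (j' + 1) =>
      have hth : (∑ i ∈ Finset.range (n + 1), if j' + 1 = i + 1 then pstar.coeff i * (-1) else 0)
          = conj lam * c' j' * (-1) := by
        have : ∀ i ∈ Finset.range (n + 1),
            (if j' + 1 = i + 1 then pstar.coeff i * (-1) else 0)
              = (if i = j' then pstar.coeff i * (-1) else 0) := by
          intro i _
          rcases eq_or_ne i j' with h | h
          · simp [h]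
          · rw [if_neg (by omega), if_neg h]
        rw [Finset.sum_congr rfl this,
          Finset.sum_ite_eq' (Finset.range (n + 1)) j' (fun i => pstar.coeff i * (-1)),
          if_pos (Finset.mem_range.mpr (by omega)), hp_coeff' j' (by omega)]
      rw [hth, if_neg (by omega)]
      rw [hc']
      simp only
      push_cast
      field_simp
      try ring
  -- Pythagoras
  set u := H.polyMul p f - H.polyMul pstar f with hu
  have hud : ⟪D, u⟫_ℂ = 0 := by
    have huD : ⟪u, D⟫_ℂ = 0 := by
      have hurep : u = ∑ i ∈ Finset.range (n + 1),
          (p.coeff i - pstar.coeff i) • ((H.S ^ i) f) := by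
        rw [hu, aux_polyMul_eq_range H p f (n + 1) (by omega),
          aux_polyMul_eq_range H pstar f (n + 1) (by omega),
          ← Finset.sum_sub_distrib]
        apply Finset.sum_congr rfl
        intro i _
        rw [sub_smul]
      rw [hurep, sum_inner]
      apply Finset.sum_eq_zero
      intro i hi
      rw [inner_smul_left, hT i (Nat.lt_succ_iff.mp (Finset.mem_range.mp hi)), mul_zero]
    rw [← inner_conj_symm, huD, map_zero]
  have hdecomp : H.polyMul p f - H.one = D + u := by
    rw [hD, hu]; abel
  rw [hdecomp]
  have hpyth : ‖D + u‖ * ‖D + u‖ = ‖D‖ * ‖D‖ + ‖u‖ * ‖u‖ :=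
    norm_add_sq_eq_norm_sq_add_norm_sq_of_inner_eq_zero D u hud
  nlinarith [norm_nonneg (D + u), norm_nonneg D, norm_nonneg u, mul_self_nonneg ‖u‖]
end
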